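/- arXiv:1101.1850 — 4 statements merged into one kernel-verified Lean document; each statement's English description precedes it below -/
import Mathlib

section
/- Let G be a finite group and H a subgroup of G. There is a group isomorphism from the abelianization H^{ab} = H/[H,H] to the group homology H_1(G, Z[G] ⊗_{Z[H]} Z) (which is the Tate cohomology group H^{-2}(G, Z[G] ⊗_{Z[H]} Z)), sending the coset σ[H,H] of σ ∈ H to the homology class of the 1-cycle [σ] ⊗ (1 ⊗ 1). -/
/-!
STATEMENT 0: For a finite group `G` and a subgroup `H ≤ G`, there is a group isomorphism
`H^{ab} ≃ H₁(G, ℤ[G] ⊗_{ℤ[H]} ℤ)` (i.e. `H⁻²(G, ℤ[G] ⊗_{ℤ[H]} ℤ)` in Tate cohomology)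
sending `σ[H,H]` to the class of the bar-resolution 1-cycle `[σ] ⊗ (1 ⊗ 1)`.

Here the induced module `ℤ[G] ⊗_{ℤ[H]} ℤ` is realized, via its canonical `ℤ[G]`-basis of
left cosets, as the permutation module `(G ⧸ H) →₀ ℤ` (free abelian group on `G ⧸ H`, with
`G` acting by left translation of cosets); the element `1 ⊗ 1` corresponds to
`single ⟦1⟧ 1`. Group homology `H₁` is computed from the bar resolution: 1-chains are
elements of `G →₀ A` (the symbol `[σ] ⊗ a` being `single σ a`), the degree-1 differential is
`[σ] ⊗ a ↦ σ • a - a`, and the degree-2 differential is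
`[σ, τ] ⊗ a ↦ [σ] ⊗ τ • a - [στ] ⊗ a + [τ] ⊗ a`.
-/

namespace BarH1

variable (G : Type) [Group G] (A : Type) [AddCommGroup A] [DistribMulAction G A]

/-- The boundary map `(G →₀ A) →+ A` of the bar resolution in degree 1:
`[σ] ⊗ a ↦ σ • a - a`. -/
noncomputable def d1 : (G →₀ A) →+ A :=
  Finsupp.liftAddHom fun σ =>
    (DistribMulAction.toAddMonoidHom A σ : A →+ A) - AddMonoidHom.id A

/-- 1-cycles of the bar resolution. -/
noncomputable def cycles : AddSubgroup (G →₀ A) := (d1 G A).ker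

/-- 1-boundaries: the image of the degree-2 bar differential
`[σ, τ] ⊗ a ↦ [σ] ⊗ τ • a - [στ] ⊗ a + [τ] ⊗ a`. -/
noncomputable def boundaries : AddSubgroup (G →₀ A) :=
  AddSubgroup.closure {x | ∃ (σ τ : G) (a : A),
    x = Finsupp.single σ (τ • a) - Finsupp.single (σ * τ) a + Finsupp.single τ a}

/-- Group homology `H₁(G, A)` (the Tate cohomology group `H⁻²(G, A)`). -/
noncomputable def H1 :=
  cycles G A ⧸ (boundaries G A).addSubgroupOf (cycles G A)

noncomputable instance : AddCommGroup (H1 G A) :=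
  QuotientAddGroup.Quotient.addCommGroup _

open scoped Classical in
/-- The homology class of a 1-cycle (junk value `0` if the argument is not a cycle). -/
noncomputable def H1mk (f : G →₀ A) : H1 G A :=
  if hf : f ∈ cycles G A then QuotientAddGroup.mk ⟨f, hf⟩ else 0

end BarH1

attribute [local instance] Finsupp.comapSMul Finsupp.comapMulAction Finsupp.comapDistribMulAction

set_option maxHeartbeats 1000000

namespace BarH1Aux

open Finsupp BarH1

variable {G : Type} [Group G] (H : Subgroup G)

local notation "A" => (G ⧸ H) →₀ ℤ
local notation "CC" => G →₀ ((G ⧸ H) →₀ ℤ)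
local notation "Ab" => Additive (Abelianization H)
local notation "ee" => (Finsupp.single ((1 : G) : G ⧸ H) (1 : ℤ) : (G ⧸ H) →₀ ℤ)

lemma d1_single (σ : G) (a : A) : d1 G ((G ⧸ H) →₀ ℤ) (single σ a) = σ • a - a := by
  rw [d1, Finsupp.liftAddHom_apply_single]; rfl

lemma smul_single' (g : G) (x : G ⧸ H) (n : ℤ) :
    g • (Finsupp.single x n : A) = Finsupp.single (g • x) n :=
  Finsupp.comapSMul_single g x n

lemma coe_smul_one (g : G) : g • ((1 : G) : G ⧸ H) = (g : G ⧸ H) := by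
  show QuotientGroup.mk (g * 1) = _
  rw [mul_one]

lemma mem_smul_one {h : G} (hh : h ∈ H) : h • ((1 : G) : G ⧸ H) = ((1 : G) : G ⧸ H) := by
  rw [coe_smul_one]
  exact QuotientGroup.eq.mpr (by simpa using inv_mem hh)

lemma smul_e {h : G} (hh : h ∈ H) : h • ee = ee := by
  rw [smul_single', mem_smul_one H hh]

lemma cyc_mem (h : H) : single (h : G) ee ∈ cycles G ((G ⧸ H) →₀ ℤ) := by
  show d1 G ((G ⧸ H) →₀ ℤ) _ = 0
  rw [d1_single, smul_e H h.2, sub_self]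

lemma bd_mem (σ τ : G) (a : A) :
    Finsupp.single σ (τ • a) - Finsupp.single (σ * τ) a + Finsupp.single τ a
      ∈ boundaries G ((G ⧸ H) →₀ ℤ) :=
  AddSubgroup.subset_closure ⟨σ, τ, a, rfl⟩

noncomputable def hEl (σ : G) (x : G ⧸ H) : H :=
  ⟨(σ • x).out⁻¹ * σ * x.out, by
    rw [mul_assoc]
    refine QuotientGroup.eq.mp ?_
    rw [QuotientGroup.out_eq']
    conv_lhs => rw [← QuotientGroup.out_eq' x]
    rfl⟩

lemma hEl_mul (σ τ : G) (x : G ⧸ H) : hEl H σ (τ • x) * hEl H τ x = hEl H (σ * τ) x := by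
  apply Subtype.ext
  show ((σ • τ • x).out⁻¹ * σ * (τ • x).out) * ((τ • x).out⁻¹ * τ * x.out)
      = ((σ * τ) • x).out⁻¹ * (σ * τ) * x.out
  rw [smul_smul]
  group

/-- θ on chains. -/
noncomputable def thetaC : CC →+ Ab :=
  Finsupp.liftAddHom fun σ => Finsupp.liftAddHom fun x =>
    zmultiplesHom _ (Additive.ofMul (Abelianization.of (hEl H σ x)))

lemma thetaC_single (σ : G) (x : G ⧸ H) (n : ℤ) :
    thetaC H (single σ (single x n)) = n • Additive.ofMul (Abelianization.of (hEl H σ x)) := by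
  rw [thetaC, Finsupp.liftAddHom_apply_single, Finsupp.liftAddHom_apply_single]
  rfl

/-- Θ' on chains, valued in chains. -/
noncomputable def ThetaC : CC →+ CC :=
  Finsupp.liftAddHom fun σ => Finsupp.liftAddHom fun x =>
    (Finsupp.singleAddHom ((hEl H σ x : G))).comp
      (Finsupp.singleAddHom ((1 : G) : G ⧸ H))

lemma ThetaC_single (σ : G) (x : G ⧸ H) :
    ThetaC H (single σ (single x 1)) = single ((hEl H σ x : G)) ee := by
  rw [ThetaC, Finsupp.liftAddHom_apply_single, Finsupp.liftAddHom_apply_single]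
  rfl

/-- section-like map A → CC. -/
noncomputable def sC : ((G ⧸ H) →₀ ℤ) →+ CC :=
  Finsupp.liftAddHom fun y =>
    (Finsupp.singleAddHom y.out).comp (Finsupp.singleAddHom ((1 : G) : G ⧸ H))

lemma sC_single (y : G ⧸ H) :
    sC H (single y 1) = single y.out ee := by
  rw [sC, Finsupp.liftAddHom_apply_single]
  rfl

lemma ThetaC_mem_cycles (c : CC) : ThetaC H c ∈ cycles G ((G ⧸ H) →₀ ℤ) := by
  have h0 : (d1 G ((G ⧸ H) →₀ ℤ)).comp (ThetaC H) = 0 := by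
    apply Finsupp.addHom_ext'; intro σ
    apply Finsupp.addHom_ext'; intro x
    apply AddMonoidHom.ext_int
    show d1 G ((G ⧸ H) →₀ ℤ) (ThetaC H (single σ (single x 1))) = 0
    rw [ThetaC_single, d1_single, smul_e H (hEl H σ x).2, sub_self]
  exact DFunLike.congr_fun h0 c

/-- the key congruence. -/
lemma key_congruence (c : CC) :
    c - (ThetaC H c + sC H (d1 G ((G ⧸ H) →₀ ℤ) c)) ∈ boundaries G ((G ⧸ H) →₀ ℤ) := by
  set B := boundaries G ((G ⧸ H) →₀ ℤ) with hB
  set π : CC →+ CC ⧸ B := QuotientAddGroup.mk' B with hπdef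
  have hπ : π.comp (AddMonoidHom.id CC - (ThetaC H + (sC H).comp (d1 G ((G ⧸ H) →₀ ℤ))))
      = 0 := by
    apply Finsupp.addHom_ext'; intro σ
    apply Finsupp.addHom_ext'; intro x
    apply AddMonoidHom.ext_int
    show π (single σ (single x 1)
        - (ThetaC H (single σ (single x 1))
            + sC H (d1 G ((G ⧸ H) →₀ ℤ) (single σ (single x 1))))) = 0
    rw [d1_single, ThetaC_single, smul_single',
      map_sub (sC H), sC_single, sC_single]
    refine (QuotientAddGroup.eq_zero_iff _).mpr ?_
    have h12 := AddSubgroup.sub_mem B (bd_mem H σ x.out ee)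
      (bd_mem H (σ • x).out ((hEl H σ x : G)) ee)
    have e2 : x.out • ee = single x 1 := by
      rw [smul_single', coe_smul_one, QuotientGroup.out_eq']
    have e3 : ((hEl H σ x : G)) • ee = ee := smul_e H (hEl H σ x).2
    have e4 : (σ • x).out * (hEl H σ x : G) = σ * x.out := by
      show (σ • x).out * ((σ • x).out⁻¹ * σ * x.out) = σ * x.out
      group
    rw [e2, e3, e4] at h12
    convert h12 using 1
    abel
  have h2 := DFunLike.congr_fun hπ c
  have h3 : π (c - (ThetaC H c + sC H (d1 G ((G ⧸ H) →₀ ℤ) c))) = 0 := h2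
  exact (QuotientAddGroup.eq_zero_iff _).mp h3


lemma theta_rel (σ τ : G) (a : A) :
    thetaC H (single σ (τ • a)) - thetaC H (single (σ * τ) a)
      + thetaC H (single τ a) = 0 := by
  induction a using Finsupp.induction_linear with
  | zero => simp
  | add f g hf hg =>
    rw [smul_add, Finsupp.single_add, Finsupp.single_add, Finsupp.single_add,
      map_add, map_add, map_add]
    calc thetaC H (single σ (τ • f)) + thetaC H (single σ (τ • g))
          - (thetaC H (single (σ * τ) f) + thetaC H (single (σ * τ) g))
          + (thetaC H (single τ f) + thetaC H (single τ g))
        = (thetaC H (single σ (τ • f)) - thetaC H (single (σ * τ) f) + thetaC H (single τ f))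
          + (thetaC H (single σ (τ • g)) - thetaC H (single (σ * τ) g)
              + thetaC H (single τ g)) := by abel
      _ = 0 := by rw [hf, hg, add_zero]
  | single x n =>
    rw [smul_single', thetaC_single, thetaC_single, thetaC_single,
      ← hEl_mul H σ τ x, map_mul, ofMul_mul, smul_add]
    abel

lemma theta_boundary : boundaries G ((G ⧸ H) →₀ ℤ) ≤ (thetaC H).ker := by
  refine (AddSubgroup.closure_le _).mpr ?_
  rintro _ ⟨σ, τ, a, rfl⟩
  show thetaC H _ = 0
  rw [map_add, map_sub]
  exact theta_rel H σ τ a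


noncomputable def thetaBar : H1 G ((G ⧸ H) →₀ ℤ) →+ Ab :=
  QuotientAddGroup.lift _ ((thetaC H).comp (cycles G ((G ⧸ H) →₀ ℤ)).subtype)
    (fun z hz => by
      have : (z : CC) ∈ boundaries G ((G ⧸ H) →₀ ℤ) := hz
      exact theta_boundary H this)

lemma mk_eq_mk {f g : CC} (hf : f ∈ cycles G ((G ⧸ H) →₀ ℤ))
    (hg : g ∈ cycles G ((G ⧸ H) →₀ ℤ)) (h : g - f ∈ boundaries G ((G ⧸ H) →₀ ℤ)) :
    (QuotientAddGroup.mk ⟨f, hf⟩ : H1 G ((G ⧸ H) →₀ ℤ)) = QuotientAddGroup.mk ⟨g, hg⟩ := by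
  rw [QuotientAddGroup.eq, AddSubgroup.mem_addSubgroupOf]
  show -f + g ∈ boundaries G ((G ⧸ H) →₀ ℤ)
  rw [neg_add_eq_sub]
  exact h

/-- the map H →* Multiplicative H1. -/
noncomputable def cycHom : H →* Multiplicative (H1 G ((G ⧸ H) →₀ ℤ)) where
  toFun h := Multiplicative.ofAdd (QuotientAddGroup.mk ⟨single (h : G) ee, cyc_mem H h⟩)
  map_one' := by
    apply congrArg Multiplicative.ofAdd
    refine (QuotientAddGroup.eq_zero_iff _).mpr ?_
    rw [AddSubgroup.mem_addSubgroupOf]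
    show single (((1:H) : G)) ee ∈ boundaries G ((G ⧸ H) →₀ ℤ)
    have := bd_mem H 1 1 ee
    rw [one_smul, one_mul] at this
    simpa using this
  map_mul' h₁ h₂ := by
    apply congrArg Multiplicative.ofAdd
    show _ = QuotientAddGroup.mk (s := (boundaries G ((G ⧸ H) →₀ ℤ)).addSubgroupOf (cycles G ((G ⧸ H) →₀ ℤ)))
          (⟨single ((h₁ : G)) ee, cyc_mem H h₁⟩ + ⟨single ((h₂ : G)) ee, cyc_mem H h₂⟩)
    apply mk_eq_mk
    show (single ((h₁ : G)) ee + single ((h₂ : G)) ee) - single (((h₁ * h₂ : H) : G)) ee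
        ∈ boundaries G ((G ⧸ H) →₀ ℤ)
    have := bd_mem H (h₁ : G) (h₂ : G) ee
    rw [smul_e H h₂.2] at this
    convert this using 1
    push_cast
    abel

noncomputable def psi : Ab →+ H1 G ((G ⧸ H) →₀ ℤ) :=
  MonoidHom.toAdditiveLeft (Abelianization.lift (cycHom H))

lemma psi_ofMul (h : H) :
    psi H (Additive.ofMul (Abelianization.of h))
      = QuotientAddGroup.mk ⟨single (h : G) ee, cyc_mem H h⟩ := by
  show ((Abelianization.lift (cycHom H)) (Abelianization.of h)).toAdd = _
  rw [Abelianization.lift_apply_of]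
  rfl

lemma out_one_mem : ((1:G) : G ⧸ H).out ∈ H := by
  have h : QuotientGroup.mk (((1:G) : G ⧸ H).out) = ((1:G) : G ⧸ H) := QuotientGroup.out_eq' _
  have h2 := QuotientGroup.eq.mp h
  simpa using inv_mem h2

lemma hEl_of_mem (h : H) :
    Abelianization.of (hEl H (h : G) ((1:G) : G ⧸ H)) = Abelianization.of h := by
  have hx : (h : G) • (((1:G)) : G ⧸ H) = ((1:G) : G ⧸ H) := mem_smul_one H h.2
  set u : H := ⟨(((1:G)) : G ⧸ H).out, out_one_mem H⟩ with hu
  have huv : hEl H (h : G) ((1:G) : G ⧸ H) = u⁻¹ * h * u := by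
    apply Subtype.ext
    show ((h : G) • (((1:G)) : G ⧸ H)).out⁻¹ * (h : G) * (((1:G)) : G ⧸ H).out = _
    rw [hx]
    rfl
  rw [huv, map_mul, map_mul, map_inv,
    mul_comm (Abelianization.of u)⁻¹ _, mul_assoc, inv_mul_cancel, mul_one]

lemma left_inv_aux (a : Ab) : thetaBar H (psi H a) = a := by
  obtain ⟨b, rfl⟩ : ∃ b, Additive.ofMul b = a := ⟨a.toMul, rfl⟩
  induction b using QuotientGroup.induction_on with
  | _ h =>
    show thetaBar H (psi H (Additive.ofMul (Abelianization.of h))) = _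
    rw [psi_ofMul]
    show thetaC H (single ((h:G)) ee) = _
    rw [thetaC_single, one_zsmul, hEl_of_mem]
    rfl

lemma right_inv_aux (z : H1 G ((G ⧸ H) →₀ ℤ)) : psi H (thetaBar H z) = z := by
  induction z using QuotientAddGroup.induction_on with
  | _ f =>
    obtain ⟨f, hf⟩ := f
    show psi H (thetaC H f) = _
    have hhom : (psi H).comp (thetaC H)
        = (QuotientAddGroup.mk' ((boundaries G ((G ⧸ H) →₀ ℤ)).addSubgroupOf
              (cycles G ((G ⧸ H) →₀ ℤ)))).comp
            ((ThetaC H).codRestrict (cycles G ((G ⧸ H) →₀ ℤ)) (ThetaC_mem_cycles H)) := by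
      apply Finsupp.addHom_ext'; intro σ
      apply Finsupp.addHom_ext'; intro x
      apply AddMonoidHom.ext_int
      show psi H (thetaC H (single σ (single x 1))) = QuotientAddGroup.mk _
      rw [thetaC_single, one_zsmul, psi_ofMul]
      apply congrArg QuotientAddGroup.mk
      apply Subtype.ext
      show single ((hEl H σ x : G)) ee = ThetaC H (single σ (single x 1))
      rw [ThetaC_single]
    have h2 := DFunLike.congr_fun hhom f
    have h3 : psi H (thetaC H f) = QuotientAddGroup.mk
        ⟨ThetaC H f, ThetaC_mem_cycles H f⟩ := h2
    rw [h3]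
    apply mk_eq_mk
    have hk := key_congruence H f
    rw [show d1 G ((G ⧸ H) →₀ ℤ) f = 0 from hf, map_zero, add_zero] at hk
    exact hk

noncomputable def iso : Ab ≃+ H1 G ((G ⧸ H) →₀ ℤ) :=
  AddEquiv.mk (Equiv.mk (psi H) (thetaBar H) (left_inv_aux H) (right_inv_aux H))
    ((psi H).map_add)

lemma iso_apply (a : Ab) : iso H a = psi H a := rfl

end BarH1Aux


theorem abelianization_iso_H1_induced
    (G : Type) [Group G] [Finite G] (H : Subgroup G) :
    ∃ φ : Additive (Abelianization H) ≃+ BarH1.H1 G ((G ⧸ H) →₀ ℤ),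
      ∀ σ : H, φ (Additive.ofMul (Abelianization.of σ)) =
        BarH1.H1mk G ((G ⧸ H) →₀ ℤ)
          (Finsupp.single (σ : G) (Finsupp.single ((1 : G) : G ⧸ H) (1 : ℤ))) := by
  refine ⟨BarH1Aux.iso H, fun σ => ?_⟩
  rw [BarH1Aux.iso_apply, BarH1Aux.psi_ofMul]
  rw [BarH1.H1mk]; symm; exact dif_pos (BarH1Aux.cyc_mem H σ)
end

section
/- Under these assumptions, the group homology H_1(G, X) (which is the Tate cohomology group H^{-2}(G, X)) is generated as an abelian group by the homology classes of the 1-cycles [τ] ⊗ (p(L) − p0(L)) for p ∈ S∖{p0} and τ ∈ G_p. -/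
set_option linter.unusedSectionVars false
set_option synthInstance.maxHeartbeats 1000000
set_option maxHeartbeats 1000000

namespace TateNF

open NumberField IsDedekindDomain

variable (K L : Type) [Field K] [Field L] [NumberField K] [NumberField L]
  [Algebra K L] [IsGalois K L] [FiniteDimensional K L]

/-- The ring homomorphism `𝓞 L → 𝓞 L` obtained by restricting `σ : L ≃ₐ[K] L` to the
ring of integers. -/
noncomputable def galRes (σ : L ≃ₐ[K] L) : (𝓞 L) →+* (𝓞 L) :=
  ((galRestrict (𝓞 K) K L (𝓞 L) σ).toAlgHom : (𝓞 L) →+* (𝓞 L))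

lemma galRes_apply (σ : L ≃ₐ[K] L) (x : 𝓞 L) :
    galRes K L σ x = galRestrict (𝓞 K) K L (𝓞 L) σ x := rfl

lemma galRes_comp (σ τ : L ≃ₐ[K] L) :
    (galRes K L σ).comp (galRes K L τ) = galRes K L (σ * τ) := by
  ext x
  simp [galRes_apply, map_mul, AlgEquiv.mul_apply]

lemma galRes_one : galRes K L 1 = RingHom.id (𝓞 L) := by
  ext x
  simp [galRes_apply, map_one]

/-- The natural action of the Galois group on the finite places of `L`:
`σ` sends a prime `P` of `𝓞 L` to its image `σ(P)` (the preimage of `P` under `σ⁻¹`). -/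
noncomputable instance : MulAction (L ≃ₐ[K] L) (HeightOneSpectrum (𝓞 L)) where
  smul σ v :=
    { asIdeal := Ideal.comap (galRes K L σ⁻¹) v.asIdeal
      isPrime := Ideal.comap_isPrime _ _
      ne_bot := fun h => v.ne_bot <| by
        have hsurj : Function.Surjective (galRes K L σ⁻¹) :=
          (galRestrict (𝓞 K) K L (𝓞 L) σ⁻¹).surjective
        rw [← Ideal.map_comap_of_surjective _ hsurj v.asIdeal, h, Ideal.map_bot] }
  one_smul v := by
    ext x
    show x ∈ Ideal.comap (galRes K L 1⁻¹) v.asIdeal ↔ _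
    rw [inv_one, galRes_one]
    simp
  mul_smul σ τ v := by
    ext x
    show x ∈ Ideal.comap (galRes K L (σ * τ)⁻¹) v.asIdeal ↔
      x ∈ Ideal.comap (galRes K L σ⁻¹) (Ideal.comap (galRes K L τ⁻¹) v.asIdeal)
    rw [Ideal.comap_comap, galRes_comp, mul_inv_rev]

lemma smul_asIdeal (σ : L ≃ₐ[K] L) (v : HeightOneSpectrum (𝓞 L)) :
    (σ • v).asIdeal = Ideal.comap (galRes K L σ⁻¹) v.asIdeal := rfl

/-- The Galois action on finite places of `L` commutes with restriction to `K`. -/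
lemma comap_algebraMap_smul (σ : L ≃ₐ[K] L) (v : HeightOneSpectrum (𝓞 L)) :
    ((σ • v).asIdeal).comap (algebraMap (𝓞 K) (𝓞 L)) =
      v.asIdeal.comap (algebraMap (𝓞 K) (𝓞 L)) := by
  rw [smul_asIdeal, Ideal.comap_comap]
  congr 1
  ext x
  simp [galRes_apply]

/-- A place of a number field `F`: either an infinite place or a finite place
(a nonzero prime of the ring of integers). -/
abbrev PlaceOf (F : Type) [Field F] [NumberField F] : Type :=
  NumberField.InfinitePlace F ⊕ HeightOneSpectrum (𝓞 F)

/-- `LiesAbove P p` means that the place `P` of `L` lies above the place `p` of `K`. -/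
def LiesAbove : PlaceOf L → PlaceOf K → Prop
  | .inl w, .inl u => w.comap (algebraMap K L) = u
  | .inr P, .inr p => P.asIdeal.comap (algebraMap (𝓞 K) (𝓞 L)) = p.asIdeal
  | _, _ => False

/-- The natural action of the Galois group on the places of `L`. -/
noncomputable instance : MulAction (L ≃ₐ[K] L) (PlaceOf L) where
  smul σ := Sum.map (fun w => σ • w) (fun v => σ • v)
  one_smul := by
    rintro (w | v)
    · show Sum.inl ((1 : L ≃ₐ[K] L) • w) = Sum.inl w
      rw [one_smul]
    · show Sum.inr ((1 : L ≃ₐ[K] L) • v) = Sum.inr v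
      rw [one_smul]
  mul_smul σ τ := by
    rintro (w | v)
    · show Sum.inl ((σ * τ) • w) = Sum.inl (σ • τ • w)
      rw [mul_smul]
    · show Sum.inr ((σ * τ) • v) = Sum.inr (σ • τ • v)
      rw [mul_smul]

lemma smul_inl (σ : L ≃ₐ[K] L) (w : NumberField.InfinitePlace L) :
    σ • (Sum.inl w : PlaceOf L) = Sum.inl (σ • w) := rfl

lemma smul_inr (σ : L ≃ₐ[K] L) (v : HeightOneSpectrum (𝓞 L)) :
    σ • (Sum.inr v : PlaceOf L) = Sum.inr (σ • v) := rfl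

lemma liesAbove_smul (σ : L ≃ₐ[K] L) (P : PlaceOf L) (p : PlaceOf K)
    (h : LiesAbove K L P p) : LiesAbove K L (σ • P) p := by
  obtain w | v := P <;> obtain u | q := p
  · rw [smul_inl]
    show (σ • w).comap (algebraMap K L) = u
    rw [NumberField.InfinitePlace.comap_smul,
      show (RingHom.comp (↑σ.symm) (algebraMap K L)) = algebraMap K L from
        RingHom.ext fun x => σ.symm.commutes x]
    exact h
  · exact (h : False).elim
  · exact (h : False).elim
  · rw [smul_inr]
    show ((σ • v).asIdeal).comap (algebraMap (𝓞 K) (𝓞 L)) = q.asIdeal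
    rw [comap_algebraMap_smul]
    exact h

variable (S : Finset (PlaceOf K))

/-- The set `S_L` of places of `L` lying above the places in `S`. -/
def SL : Set (PlaceOf L) := {P | ∃ p ∈ S, LiesAbove K L P p}

/-- The Galois action on `S_L`. -/
noncomputable instance : MulAction (L ≃ₐ[K] L) ↥(SL K L S) where
  smul σ P := ⟨σ • (P : PlaceOf L), by
    obtain ⟨p, hp, h⟩ := P.2
    exact ⟨p, hp, liesAbove_smul K L σ _ _ h⟩⟩
  one_smul P := Subtype.ext (one_smul _ (P : PlaceOf L))
  mul_smul σ τ P := Subtype.ext (mul_smul σ τ (P : PlaceOf L))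

/-- The decomposition group of a place `P ∈ S_L`: the stabilizer of `P` under the Galois
action on the places of `L`. -/
noncomputable def DecompGrp (P : ↥(SL K L S)) : Subgroup (L ≃ₐ[K] L) :=
  MulAction.stabilizer (L ≃ₐ[K] L) (P : PlaceOf L)

attribute [local instance] Finsupp.comapSMul Finsupp.comapMulAction Finsupp.comapDistribMulAction

/-- `Y`: the free abelian group on `S_L`, with the Galois group permuting the basis. -/
abbrev Y : Type := ↥(SL K L S) →₀ ℤ

/-- The augmentation map `Y → ℤ`, sending every place in `S_L` to `1`. -/
noncomputable def augY : Y K L S →+ ℤ :=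
  Finsupp.liftAddHom fun _ => AddMonoidHom.id ℤ

lemma augY_smul (σ : L ≃ₐ[K] L) (f : Y K L S) : augY K L S (σ • f) = augY K L S f := by
  show augY K L S (Finsupp.mapDomain (fun P => σ • P) f) = _
  simp only [augY, Finsupp.liftAddHom_apply]
  exact Finsupp.sum_mapDomain_index (fun _ => rfl) (fun _ _ _ => rfl)

/-- `X`: the kernel of the augmentation map `Y → ℤ`, as a subgroup of `Y`. -/
noncomputable def Xsub : AddSubgroup (Y K L S) := (augY K L S).ker

lemma mem_Xsub (f : Y K L S) : f ∈ Xsub K L S ↔ augY K L S f = 0 := Iff.rfl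

/-- The Galois action on `X`. -/
noncomputable instance : DistribMulAction (L ≃ₐ[K] L) ↥(Xsub K L S) where
  smul σ x := ⟨σ • (x : Y K L S), by
    rw [mem_Xsub, augY_smul]
    exact (mem_Xsub K L S _).mp x.2⟩
  one_smul x := Subtype.ext (one_smul _ (x : Y K L S))
  mul_smul σ τ x := Subtype.ext (mul_smul σ τ (x : Y K L S))
  smul_zero σ := Subtype.ext (smul_zero (A := Y K L S) σ)
  smul_add σ x y := Subtype.ext (smul_add σ (x : Y K L S) (y : Y K L S))

/-- The element `P - P'` of `X`, for places `P, P' ∈ S_L`. -/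
noncomputable def Xgen (P P' : ↥(SL K L S)) : ↥(Xsub K L S) :=
  ⟨Finsupp.single P 1 - Finsupp.single P' 1, by
    rw [mem_Xsub, map_sub]
    simp [augY]⟩

end TateNF
namespace Proof3

open TateNF NumberField IsDedekindDomain Finsupp

variable (K L : Type) [Field K] [Field L] [NumberField K] [NumberField L]
  [Algebra K L] [IsGalois K L] [FiniteDimensional K L]

lemma galRes_inv_comp (σ : L ≃ₐ[K] L) (x : 𝓞 L) :
    galRes K L σ⁻¹ (galRes K L σ x) = x := by
  have := galRes_comp K L σ⁻¹ σ
  rw [inv_mul_cancel, galRes_one K L] at this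
  exact RingHom.congr_fun this x

lemma smul_asIdeal_eq_map (σ : L ≃ₐ[K] L) (v : HeightOneSpectrum (𝓞 L)) :
    (σ • v).asIdeal = Ideal.map (galRes K L σ) v.asIdeal := by
  rw [smul_asIdeal]
  apply le_antisymm
  · intro x hx
    rw [Ideal.mem_comap] at hx
    have : x = galRes K L σ (galRes K L σ⁻¹ x) := by
      have h := galRes_comp K L σ σ⁻¹
      rw [mul_inv_cancel, galRes_one K L] at h
      exact (RingHom.congr_fun h x).symm
    rw [this]
    exact Ideal.mem_map_of_mem _ hx
  · rw [Ideal.map_le_iff_le_comap]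
    intro x hx
    rw [Ideal.mem_comap, Ideal.mem_comap, galRes_inv_comp]
    exact hx

/-- Transitivity of the Galois action on finite places above a given place. -/
lemma exists_smul_eq_finite (P Q : HeightOneSpectrum (𝓞 L))
    (h : P.asIdeal.comap (algebraMap (𝓞 K) (𝓞 L)) = Q.asIdeal.comap (algebraMap (𝓞 K) (𝓞 L))) :
    ∃ σ : L ≃ₐ[K] L, σ • P = Q := by
  classical
  by_cases hc : ∀ x ∈ Q.asIdeal, ∃ σ : L ≃ₐ[K] L, x ∈ ((σ • P : HeightOneSpectrum (𝓞 L)).asIdeal)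
  · -- then Q ⊆ ⋃ σ, (σ • P), prime avoidance gives Q ≤ σ • P for some σ, maximality gives eq
    have hsub : (Q.asIdeal : Set (𝓞 L)) ⊆
        ⋃ σ ∈ (Finset.univ : Finset (L ≃ₐ[K] L)), ((σ • P : HeightOneSpectrum (𝓞 L)).asIdeal : Set (𝓞 L)) := by
      intro x hx
      obtain ⟨σ, hσ⟩ := hc x hx
      exact Set.mem_biUnion (Finset.mem_univ σ) hσ
    obtain ⟨σ, -, hle⟩ := (Ideal.subset_union_prime 1 1
      (fun σ _ _ _ => (σ • P : HeightOneSpectrum (𝓞 L)).isPrime)).mp hsub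
    refine ⟨σ, HeightOneSpectrum.ext ?_⟩
    exact ((Q.isMaximal.eq_of_le (σ • P).isPrime.ne_top hle)).symm
  · push_neg at hc
    obtain ⟨x, hxQ, hxP⟩ := hc
    exfalso
    -- the product of conjugates of x is the image of an element of 𝓞 K
    have hprod := prod_galRestrict_eq_norm (𝓞 K) K L (𝓞 L) x
    set y := IsIntegralClosure.mk' (R := 𝓞 K) (𝓞 K) (Algebra.norm K <| algebraMap (𝓞 L) L x)
      (Algebra.isIntegral_norm K (IsIntegralClosure.isIntegral (𝓞 K) L x).algebraMap) with hy
    have hyQ : algebraMap (𝓞 K) (𝓞 L) y ∈ Q.asIdeal := by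
      rw [← hprod, ← Finset.mul_prod_erase _ _ (Finset.mem_univ (1 : L ≃ₐ[K] L))]
      have h1 : galRestrict (𝓞 K) K L (𝓞 L) 1 x = x := by
        rw [map_one]; rfl
      rw [h1]
      exact Ideal.mul_mem_right _ _ hxQ
    have hyP : algebraMap (𝓞 K) (𝓞 L) y ∈ P.asIdeal := by
      have : y ∈ P.asIdeal.comap (algebraMap (𝓞 K) (𝓞 L)) := by
        rw [h]; exact hyQ
      exact this
    rw [← hprod] at hyP
    obtain ⟨σ, -, hσ⟩ := (Ideal.IsPrime.prod_mem_iff (hp := P.isPrime)).mp hyP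
    refine hxP σ⁻¹ ?_
    rw [smul_asIdeal_eq_map]
    have : x = galRes K L σ⁻¹ (galRes K L σ x) := (galRes_inv_comp K L σ x).symm
    rw [this]
    exact Ideal.mem_map_of_mem _ hσ

end Proof3

namespace Proof3

open TateNF NumberField IsDedekindDomain Finsupp

variable (K L : Type) [Field K] [Field L] [NumberField K] [NumberField L]
  [Algebra K L] [IsGalois K L] [FiniteDimensional K L]

/-- Transitivity of the Galois action on the places above a fixed place. -/
lemma exists_smul_eq_place (P Q : PlaceOf L) (p : PlaceOf K)
    (hP : LiesAbove K L P p) (hQ : LiesAbove K L Q p) :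
    ∃ σ : L ≃ₐ[K] L, σ • P = Q := by
  obtain w | v := P <;> obtain w' | v' := Q <;> obtain u | q := p
  · obtain ⟨σ, hσ⟩ := NumberField.InfinitePlace.exists_smul_eq_of_comap_eq
      (k := K) (K := L) (w := w) (w' := w') (by rw [hP, hQ])
    exact ⟨σ, by rw [smul_inl, hσ]⟩
  · exact (hP : False).elim
  · exact (hQ : False).elim
  · exact (hP : False).elim
  · exact (hP : False).elim
  · exact (hQ : False).elim
  · exact (hP : False).elim
  · obtain ⟨σ, hσ⟩ := exists_smul_eq_finite K L v v' (by rw [hP, hQ])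
    exact ⟨σ, by rw [smul_inr, hσ]⟩

/-- A place of `L` lies above at most one place of `K`. -/
lemma liesAbove_unique (P : PlaceOf L) (p q : PlaceOf K)
    (hp : LiesAbove K L P p) (hq : LiesAbove K L P q) : p = q := by
  obtain w | v := P <;> obtain u | r := p <;> obtain u' | r' := q
  · exact congrArg Sum.inl (hp.symm.trans hq)
  · exact (hq : False).elim
  · exact (hp : False).elim
  · exact (hp : False).elim
  · exact (hp : False).elim
  · exact (hp : False).elim
  · exact (hq : False).elim
  · exact congrArg Sum.inr (HeightOneSpectrum.ext (hp.symm.trans hq))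

end Proof3

namespace Proof3

open TateNF BarH1 NumberField IsDedekindDomain Finsupp

attribute [local instance] Finsupp.comapSMul Finsupp.comapMulAction Finsupp.comapDistribMulAction

variable (K L : Type) [Field K] [Field L] [NumberField K] [NumberField L]
  [Algebra K L] [IsGalois K L] [FiniteDimensional K L]
  (S : Finset (PlaceOf K))
  (PL : ∀ p ∈ S, ↥(SL K L S))
  (hPL : ∀ (p : PlaceOf K) (hp : p ∈ S), LiesAbove K L (PL p hp : PlaceOf L) p)
  (p0 : PlaceOf K) (hp0S : p0 ∈ S)
  (hp0full : DecompGrp K L S (PL p0 hp0S) = ⊤)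

/-- `e P = P - P₀` in `X`. -/
noncomputable def ee (P : ↥(SL K L S)) : ↥(Xsub K L S) := Xgen K L S P (PL p0 hp0S)

lemma coe_smul_SL (σ : L ≃ₐ[K] L) (P : ↥(SL K L S)) :
    ((σ • P : ↥(SL K L S)) : PlaceOf L) = σ • (P : PlaceOf L) := rfl

lemma coe_smul_A (σ : L ≃ₐ[K] L) (a : ↥(Xsub K L S)) :
    ((σ • a : ↥(Xsub K L S)) : Y K L S) = σ • (a : Y K L S) := rfl

lemma smul_Y_single (σ : L ≃ₐ[K] L) (P : ↥(SL K L S)) (n : ℤ) :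
    σ • (single P n : Y K L S) = single (σ • P) n :=
  Finsupp.comapSMul_single σ P n

include hp0full in
lemma smul_P0 (σ : L ≃ₐ[K] L) : σ • (PL p0 hp0S) = PL p0 hp0S := by
  have : σ ∈ DecompGrp K L S (PL p0 hp0S) := by rw [hp0full]; trivial
  exact Subtype.ext this

lemma smul_stab {p : PlaceOf K} {hp : p ∈ S} {σ : L ≃ₐ[K] L}
    (h : σ ∈ DecompGrp K L S (PL p hp)) : σ • (PL p hp) = PL p hp :=
  Subtype.ext h

include hp0full in
lemma ee_smul (σ : L ≃ₐ[K] L) (P : ↥(SL K L S)) :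
    σ • ee K L S PL p0 hp0S P = ee K L S PL p0 hp0S (σ • P) := by
  apply Subtype.ext
  rw [coe_smul_A]
  show σ • ((single P 1 : Y K L S) - single (PL p0 hp0S) 1) = _
  rw [smul_sub, smul_Y_single, smul_Y_single, smul_P0 K L S PL p0 hp0S hp0full]
  rfl

lemma ee_P0 : ee K L S PL p0 hp0S (PL p0 hp0S) = 0 :=
  Subtype.ext (sub_self _)

/-- `X` is generated by the elements `e P`. -/
lemma A_gen (a : ↥(Xsub K L S)) :
    a ∈ AddSubgroup.closure (Set.range (ee K L S PL p0 hp0S)) := by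
  classical
  have key : a = ∑ P ∈ (a : Y K L S).support, ((a : Y K L S) P) • ee K L S PL p0 hp0S P := by
    apply Subtype.ext
    have h2 : ((∑ P ∈ (a : Y K L S).support,
          ((a : Y K L S) P) • ee K L S PL p0 hp0S P : ↥(Xsub K L S)) : Y K L S)
        = ∑ P ∈ (a : Y K L S).support,
          ((a : Y K L S) P) • ((ee K L S PL p0 hp0S P : ↥(Xsub K L S)) : Y K L S) :=
      (map_sum ((Xsub K L S).subtype) _ _).trans
        (Finset.sum_congr rfl fun P _ => map_zsmul ((Xsub K L S).subtype) _ _)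
    rw [h2]
    show (a : Y K L S) = ∑ P ∈ (a : Y K L S).support,
      ((a : Y K L S) P) • ((single P 1 : Y K L S) - single (PL p0 hp0S) 1)
    have haug : ∑ P ∈ (a : Y K L S).support, (a : Y K L S) P = 0 := by
      have h0 := (mem_Xsub K L S (a : Y K L S)).mp a.2
      rw [← h0]
      simp [augY, Finsupp.liftAddHom_apply, Finsupp.sum]
    have h3 : ∑ P ∈ (a : Y K L S).support, ((a : Y K L S) P) • (single P 1 : Y K L S)
        = (a : Y K L S) := by
      conv_rhs => rw [← Finsupp.sum_single (a : Y K L S)]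
      rw [Finsupp.sum]
      exact Finset.sum_congr rfl fun P _ => by
        rw [Finsupp.smul_single, smul_eq_mul, mul_one]
    have h4 : ∑ P ∈ (a : Y K L S).support,
        ((a : Y K L S) P) • (single (PL p0 hp0S) 1 : Y K L S) = 0 := by
      have hterm : ∀ P ∈ (a : Y K L S).support,
          ((a : Y K L S) P) • (single (PL p0 hp0S) 1 : Y K L S)
            = single (PL p0 hp0S) ((a : Y K L S) P) := fun P _ => by
        rw [Finsupp.smul_single, smul_eq_mul, mul_one]
      rw [Finset.sum_congr rfl hterm]
      simp only [← Finsupp.singleAddHom_apply, ← map_sum, haug, map_zero]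
    simp only [smul_sub, Finset.sum_sub_distrib, h3, h4, sub_zero]
  rw [key]
  exact AddSubgroup.sum_mem _ fun P _ =>
    AddSubgroup.zsmul_mem _ (AddSubgroup.subset_closure (Set.mem_range_self P)) _

end Proof3

namespace Proof3

open TateNF BarH1 NumberField IsDedekindDomain Finsupp

attribute [local instance] Finsupp.comapSMul Finsupp.comapMulAction Finsupp.comapDistribMulAction

variable (K L : Type) [Field K] [Field L] [NumberField K] [NumberField L]
  [Algebra K L] [IsGalois K L] [FiniteDimensional K L]
  (S : Finset (PlaceOf K))
  (PL : ∀ p ∈ S, ↥(SL K L S))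
  (hPL : ∀ (p : PlaceOf K) (hp : p ∈ S), LiesAbove K L (PL p hp : PlaceOf L) p)
  (p0 : PlaceOf K) (hp0S : p0 ∈ S)
  (hp0full : DecompGrp K L S (PL p0 hp0S) = ⊤)

/-- The place of `K` under a place in `S_L`. -/
noncomputable def pl (P : ↥(SL K L S)) : PlaceOf K := P.2.choose

lemma pl_memS (P : ↥(SL K L S)) : pl K L S P ∈ S := P.2.choose_spec.1

lemma pl_liesAbove (P : ↥(SL K L S)) : LiesAbove K L (P : PlaceOf L) (pl K L S P) :=
  P.2.choose_spec.2

lemma pl_smul (σ : L ≃ₐ[K] L) (P : ↥(SL K L S)) : pl K L S (σ • P) = pl K L S P :=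
  liesAbove_unique K L (σ • P : ↥(SL K L S)) _ _ (pl_liesAbove K L S (σ • P))
    (liesAbove_smul K L σ _ _ (pl_liesAbove K L S P))

include hPL hp0S in
lemma pl_P0 : pl K L S (PL p0 hp0S) = p0 :=
  liesAbove_unique K L (PL p0 hp0S : PlaceOf L) _ _ (pl_liesAbove K L S (PL p0 hp0S))
    (hPL p0 hp0S)

open scoped Classical in
/-- A total version of the choice of places above. -/
noncomputable def PLtot (p : PlaceOf K) : ↥(SL K L S) :=
  if hp : p ∈ S then PL p hp else PL p0 hp0S

lemma PLtot_of_mem {p : PlaceOf K} (hp : p ∈ S) : PLtot K L S PL p0 hp0S p = PL p hp :=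
  dif_pos hp

/-- The chosen place above the place under `P`. -/
noncomputable def PP (P : ↥(SL K L S)) : ↥(SL K L S) :=
  PLtot K L S PL p0 hp0S (pl K L S P)

lemma PP_smul (σ : L ≃ₐ[K] L) (P : ↥(SL K L S)) :
    PP K L S PL p0 hp0S (σ • P) = PP K L S PL p0 hp0S P := by
  unfold PP
  rw [pl_smul]

include hPL in
lemma PP_liesAbove (P : ↥(SL K L S)) :
    LiesAbove K L (PP K L S PL p0 hp0S P : PlaceOf L) (pl K L S P) := by
  unfold PP
  rw [PLtot_of_mem K L S PL p0 hp0S (pl_memS K L S P)]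
  exact hPL _ _

include hPL in
lemma exists_rho (P : ↥(SL K L S)) :
    ∃ σ : L ≃ₐ[K] L, σ • PP K L S PL p0 hp0S P = P := by
  obtain ⟨σ, hσ⟩ := exists_smul_eq_place K L (PP K L S PL p0 hp0S P : PlaceOf L)
    (P : PlaceOf L) (pl K L S P) (PP_liesAbove K L S PL hPL p0 hp0S P)
    (pl_liesAbove K L S P)
  exact ⟨σ, Subtype.ext hσ⟩

/-- A choice of `ρ` with `ρ • PP P = P`. -/
noncomputable def rho (P : ↥(SL K L S)) : L ≃ₐ[K] L :=
  (exists_rho K L S PL hPL p0 hp0S P).choose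

lemma rho_spec (P : ↥(SL K L S)) :
    rho K L S PL hPL p0 hp0S P • PP K L S PL p0 hp0S P = P :=
  (exists_rho K L S PL hPL p0 hp0S P).choose_spec

/-- The reduced chain attached to a place `P`. -/
noncomputable def cP (P : ↥(SL K L S)) : (L ≃ₐ[K] L) →₀ ↥(Xsub K L S) :=
  single (rho K L S PL hPL p0 hp0S P) (ee K L S PL p0 hp0S (PP K L S PL p0 hp0S P))

/-- The partial homotopy `Y →+ chains`. -/
noncomputable def PsiY : Y K L S →+ ((L ≃ₐ[K] L) →₀ ↥(Xsub K L S)) :=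
  Finsupp.liftAddHom fun P => (zmultiplesHom _) (cP K L S PL hPL p0 hp0S P)

/-- The partial homotopy `X →+ chains`. -/
noncomputable def PsiA : ↥(Xsub K L S) →+ ((L ≃ₐ[K] L) →₀ ↥(Xsub K L S)) :=
  (PsiY K L S PL hPL p0 hp0S).comp (Xsub K L S).subtype

/-- `Θ = Ψ ∘ d₁`. -/
noncomputable def Theta : ((L ≃ₐ[K] L) →₀ ↥(Xsub K L S)) →+ ((L ≃ₐ[K] L) →₀ ↥(Xsub K L S)) :=
  (PsiA K L S PL hPL p0 hp0S).comp (d1 (L ≃ₐ[K] L) ↥(Xsub K L S))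

include hp0full in
lemma cP_P0 : cP K L S PL hPL p0 hp0S (PL p0 hp0S) = 0 := by
  unfold cP
  have h : PP K L S PL p0 hp0S (PL p0 hp0S) = PL p0 hp0S := by
    unfold PP
    rw [pl_P0 K L S PL hPL p0 hp0S, PLtot_of_mem]
  rw [h, ee_P0, Finsupp.single_zero]

include hp0full in
lemma PsiA_ee (P : ↥(SL K L S)) :
    PsiA K L S PL hPL p0 hp0S (ee K L S PL p0 hp0S P) = cP K L S PL hPL p0 hp0S P := by
  have h0 : ((ee K L S PL p0 hp0S P : ↥(Xsub K L S)) : Y K L S)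
      = (single P 1 : Y K L S) - single (PL p0 hp0S) 1 := rfl
  unfold PsiA
  rw [AddMonoidHom.comp_apply, AddSubgroup.coe_subtype, h0, map_sub]
  unfold PsiY
  rw [Finsupp.liftAddHom_apply_single, Finsupp.liftAddHom_apply_single]
  simp only [zmultiplesHom_apply, one_smul]
  rw [cP_P0 K L S PL hPL p0 hp0S hp0full, sub_zero]

lemma d1_single (σ : L ≃ₐ[K] L) (a : ↥(Xsub K L S)) :
    d1 (L ≃ₐ[K] L) ↥(Xsub K L S) (single σ a) = σ • a - a := by
  unfold d1
  rw [Finsupp.liftAddHom_apply_single]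
  rfl

end Proof3

namespace Proof3

open TateNF BarH1 NumberField IsDedekindDomain Finsupp

attribute [local instance] Finsupp.comapSMul Finsupp.comapMulAction Finsupp.comapDistribMulAction

variable (K L : Type) [Field K] [Field L] [NumberField K] [NumberField L]
  [Algebra K L] [IsGalois K L] [FiniteDimensional K L]
  (S : Finset (PlaceOf K))
  (PL : ∀ p ∈ S, ↥(SL K L S))
  (hPL : ∀ (p : PlaceOf K) (hp : p ∈ S), LiesAbove K L (PL p hp : PlaceOf L) p)
  (p0 : PlaceOf K) (hp0S : p0 ∈ S)
  (hp0full : DecompGrp K L S (PL p0 hp0S) = ⊤)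

/-- The generating 1-chains, at the chain level. -/
def genSet : Set ((L ≃ₐ[K] L) →₀ ↥(Xsub K L S)) :=
  {x | ∃ (p : PlaceOf K) (hp : p ∈ S), p ≠ p0 ∧ ∃ τ ∈ DecompGrp K L S (PL p hp),
    x = single τ (Xgen K L S (PL p hp) (PL p0 hp0S))}

/-- Boundaries together with the generating chains. -/
noncomputable def Mprime : AddSubgroup ((L ≃ₐ[K] L) →₀ ↥(Xsub K L S)) :=
  boundaries (L ≃ₐ[K] L) ↥(Xsub K L S) ⊔ AddSubgroup.closure (genSet K L S PL p0 hp0S)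

include hPL hp0full in
lemma core (σ : L ≃ₐ[K] L) (P : ↥(SL K L S)) :
    single σ (ee K L S PL p0 hp0S P)
      - Theta K L S PL hPL p0 hp0S (single σ (ee K L S PL p0 hp0S P))
      ∈ Mprime K L S PL p0 hp0S := by
  have hTheta : Theta K L S PL hPL p0 hp0S (single σ (ee K L S PL p0 hp0S P))
      = cP K L S PL hPL p0 hp0S (σ • P) - cP K L S PL hPL p0 hp0S P := by
    unfold Theta
    rw [AddMonoidHom.comp_apply, d1_single, map_sub,
      ee_smul K L S PL p0 hp0S hp0full σ P,
      PsiA_ee K L S PL hPL p0 hp0S hp0full, PsiA_ee K L S PL hPL p0 hp0S hp0full]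
  rw [hTheta]
  by_cases h : pl K L S P = p0
  · -- everything vanishes
    have hP : P = PL p0 hp0S := by
      have h1 := rho_spec K L S PL hPL p0 hp0S P
      have h2 : PP K L S PL p0 hp0S P = PL p0 hp0S := by
        unfold PP
        rw [h, PLtot_of_mem]
      rw [h2, smul_P0 K L S PL p0 hp0S hp0full] at h1
      exact h1.symm
    rw [hP, ee_P0, smul_P0 K L S PL p0 hp0S hp0full,
      cP_P0 K L S PL hPL p0 hp0S hp0full, Finsupp.single_zero]
    simp only [sub_self, sub_zero]
    exact zero_mem _
  · set p := pl K L S P with hpdef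
    have hp : p ∈ S := pl_memS K L S P
    set Pp := PP K L S PL p0 hp0S P with hPpdef
    set ρ := rho K L S PL hPL p0 hp0S P with hρdef
    set ρ' := rho K L S PL hPL p0 hp0S (σ • P) with hρ'def
    set τ := ρ'⁻¹ * (σ * ρ) with hτdef
    have hPPs : PP K L S PL p0 hp0S (σ • P) = Pp := PP_smul K L S PL p0 hp0S σ P
    have hρ : ρ • Pp = P := rho_spec K L S PL hPL p0 hp0S P
    have hρ' : ρ' • Pp = σ • P := by
      have := rho_spec K L S PL hPL p0 hp0S (σ • P)
      rwa [hPPs] at this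
    have hτPp : τ • Pp = Pp := by
      rw [hτdef, mul_smul, mul_smul, hρ, ← hρ', inv_smul_smul]
    have hPp_eq : Pp = PL p hp := by
      rw [hPpdef]
      unfold PP
      rw [← hpdef, PLtot_of_mem]
    have hτD : τ ∈ DecompGrp K L S (PL p hp) := by
      show τ • ((PL p hp : ↥(SL K L S)) : PlaceOf L) = ((PL p hp : ↥(SL K L S)) : PlaceOf L)
      rw [← hPp_eq, ← coe_smul_SL, hτPp]
    have hsmul1 : ρ • ee K L S PL p0 hp0S Pp = ee K L S PL p0 hp0S P := by
      rw [ee_smul K L S PL p0 hp0S hp0full, hρ]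
    have hsmul2 : τ • ee K L S PL p0 hp0S Pp = ee K L S PL p0 hp0S Pp := by
      rw [ee_smul K L S PL p0 hp0S hp0full, hτPp]
    have hrt : ρ' * τ = σ * ρ := by
      rw [hτdef, mul_inv_cancel_left]
    have hb1 : single σ (ee K L S PL p0 hp0S P)
        - single (σ * ρ) (ee K L S PL p0 hp0S Pp)
        + single ρ (ee K L S PL p0 hp0S Pp)
        ∈ boundaries (L ≃ₐ[K] L) ↥(Xsub K L S) :=
      AddSubgroup.subset_closure ⟨σ, ρ, ee K L S PL p0 hp0S Pp, by rw [hsmul1]⟩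
    have hb2 : single ρ' (ee K L S PL p0 hp0S Pp)
        - single (σ * ρ) (ee K L S PL p0 hp0S Pp)
        + single τ (ee K L S PL p0 hp0S Pp)
        ∈ boundaries (L ≃ₐ[K] L) ↥(Xsub K L S) :=
      AddSubgroup.subset_closure ⟨ρ', τ, ee K L S PL p0 hp0S Pp, by rw [hsmul2, hrt]⟩
    have hg : single τ (ee K L S PL p0 hp0S Pp) ∈ genSet K L S PL p0 hp0S := by
      refine ⟨p, hp, h, τ, hτD, ?_⟩
      rw [hPp_eq]
      rfl
    have hcP1 : cP K L S PL hPL p0 hp0S (σ • P) = single ρ' (ee K L S PL p0 hp0S Pp) := by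
      unfold cP
      rw [← hρ'def, hPPs]
    have hcP2 : cP K L S PL hPL p0 hp0S P = single ρ (ee K L S PL p0 hp0S Pp) := by
      unfold cP
      rw [← hρdef, ← hPpdef]
    have key : single σ (ee K L S PL p0 hp0S P)
        - (cP K L S PL hPL p0 hp0S (σ • P) - cP K L S PL hPL p0 hp0S P)
        = (single σ (ee K L S PL p0 hp0S P)
            - single (σ * ρ) (ee K L S PL p0 hp0S Pp)
            + single ρ (ee K L S PL p0 hp0S Pp))
          - (single ρ' (ee K L S PL p0 hp0S Pp)
            - single (σ * ρ) (ee K L S PL p0 hp0S Pp)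
            + single τ (ee K L S PL p0 hp0S Pp))
          + single τ (ee K L S PL p0 hp0S Pp) := by
      rw [hcP1, hcP2]
      abel
    rw [key]
    unfold Mprime
    exact add_mem (sub_mem (AddSubgroup.mem_sup_left hb1) (AddSubgroup.mem_sup_left hb2))
      (AddSubgroup.mem_sup_right (AddSubgroup.subset_closure hg))

end Proof3

namespace Proof3

open TateNF BarH1 NumberField IsDedekindDomain Finsupp

attribute [local instance] Finsupp.comapSMul Finsupp.comapMulAction Finsupp.comapDistribMulAction

variable (K L : Type) [Field K] [Field L] [NumberField K] [NumberField L]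
  [Algebra K L] [IsGalois K L] [FiniteDimensional K L]
  (S : Finset (PlaceOf K))
  (PL : ∀ p ∈ S, ↥(SL K L S))
  (hPL : ∀ (p : PlaceOf K) (hp : p ∈ S), LiesAbove K L (PL p hp : PlaceOf L) p)
  (p0 : PlaceOf K) (hp0S : p0 ∈ S)
  (hp0full : DecompGrp K L S (PL p0 hp0S) = ⊤)

include hPL hp0full in
lemma sub_theta_mem (c : (L ≃ₐ[K] L) →₀ ↥(Xsub K L S)) :
    c - Theta K L S PL hPL p0 hp0S c ∈ Mprime K L S PL p0 hp0S := by
  have hsingle : ∀ (σ : L ≃ₐ[K] L) (a : ↥(Xsub K L S)),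
      single σ a - Theta K L S PL hPL p0 hp0S (single σ a) ∈ Mprime K L S PL p0 hp0S := by
    intro σ a
    let F : ↥(Xsub K L S) →+ ((L ≃ₐ[K] L) →₀ ↥(Xsub K L S)) :=
      (Finsupp.singleAddHom σ) - (Theta K L S PL hPL p0 hp0S).comp (Finsupp.singleAddHom σ)
    have hle : AddSubgroup.closure (Set.range (ee K L S PL p0 hp0S))
        ≤ AddSubgroup.comap F (Mprime K L S PL p0 hp0S) := by
      rw [AddSubgroup.closure_le]
      rintro _ ⟨P, rfl⟩
      show F (ee K L S PL p0 hp0S P) ∈ Mprime K L S PL p0 hp0S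
      simp only [F, AddMonoidHom.sub_apply, AddMonoidHom.comp_apply,
        Finsupp.singleAddHom_apply]
      exact core K L S PL hPL p0 hp0S hp0full σ P
    have hmem := hle (A_gen K L S PL p0 hp0S a)
    have : F a ∈ Mprime K L S PL p0 hp0S := hmem
    simpa only [F, AddMonoidHom.sub_apply, AddMonoidHom.comp_apply,
      Finsupp.singleAddHom_apply] using this
  refine Finsupp.induction c ?_ ?_
  · simpa using zero_mem (Mprime K L S PL p0 hp0S)
  · intro σ a f _ _ ih
    have heq : (single σ a + f) - Theta K L S PL hPL p0 hp0S (single σ a + f)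
        = (single σ a - Theta K L S PL hPL p0 hp0S (single σ a))
          + (f - Theta K L S PL hPL p0 hp0S f) := by
      rw [map_add]
      abel
    rw [heq]
    exact add_mem (hsingle σ a) ih

lemma boundaries_le_cycles :
    boundaries (L ≃ₐ[K] L) ↥(Xsub K L S) ≤ cycles (L ≃ₐ[K] L) ↥(Xsub K L S) := by
  rw [boundaries, AddSubgroup.closure_le]
  rintro _ ⟨σ, τ, a, rfl⟩
  show _ ∈ cycles (L ≃ₐ[K] L) ↥(Xsub K L S)
  have : d1 (L ≃ₐ[K] L) ↥(Xsub K L S)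
      (single σ (τ • a) - single (σ * τ) a + single τ a) = 0 := by
    rw [map_add, map_sub, d1_single, d1_single, d1_single, mul_smul]
    abel
  exact this

include hp0full in
lemma genSet_subset_cycles :
    genSet K L S PL p0 hp0S ⊆ ↑(cycles (L ≃ₐ[K] L) ↥(Xsub K L S)) := by
  rintro _ ⟨p, hp, hne, τ, hτ, rfl⟩
  have hfix : τ • (Xgen K L S (PL p hp) (PL p0 hp0S))
      = Xgen K L S (PL p hp) (PL p0 hp0S) := by
    have h1 : τ • (PL p hp) = PL p hp := smul_stab K L S PL hτ
    have h2 := ee_smul K L S PL p0 hp0S hp0full τ (PL p hp)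
    rw [h1] at h2
    exact h2
  have : d1 (L ≃ₐ[K] L) ↥(Xsub K L S)
      (single τ (Xgen K L S (PL p hp) (PL p0 hp0S))) = 0 := by
    rw [d1_single]
    show τ • (Xgen K L S (PL p hp) (PL p0 hp0S)) - _ = 0
    rw [hfix, sub_self]
  exact this

include hp0full in
lemma Mprime_le_cycles :
    Mprime K L S PL p0 hp0S ≤ cycles (L ≃ₐ[K] L) ↥(Xsub K L S) :=
  sup_le (boundaries_le_cycles K L S)
    ((AddSubgroup.closure_le _).mpr (genSet_subset_cycles K L S PL p0 hp0S hp0full))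

include hPL hp0full in
lemma cycles_le_Mprime :
    cycles (L ≃ₐ[K] L) ↥(Xsub K L S) ≤ Mprime K L S PL p0 hp0S := by
  intro c hc
  have h0 : d1 (L ≃ₐ[K] L) ↥(Xsub K L S) c = 0 := hc
  have hT : Theta K L S PL hPL p0 hp0S c = 0 := by
    unfold Theta
    rw [AddMonoidHom.comp_apply, h0, map_zero]
  have h := sub_theta_mem K L S PL hPL p0 hp0S hp0full c
  rwa [hT, sub_zero] at h

end Proof3

open TateNF in
theorem homology_X_generated_by
    (K L : Type) [Field K] [Field L] [NumberField K] [NumberField L]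
    [Algebra K L] [IsGalois K L] [FiniteDimensional K L]
    (S : Finset (TateNF.PlaceOf K))
    -- `S` contains all the infinite places of `K`
    (hSinf : ∀ w : NumberField.InfinitePlace K, Sum.inl w ∈ S)
    -- `S` contains all the finite places of `K` that ramify in `L/K`
    (hSram : ∀ (p : IsDedekindDomain.HeightOneSpectrum (NumberField.RingOfIntegers K))
      (P : IsDedekindDomain.HeightOneSpectrum (NumberField.RingOfIntegers L)),
      P.asIdeal.comap (algebraMap (NumberField.RingOfIntegers K) (NumberField.RingOfIntegers L))
          = p.asIdeal →
      1 < Ideal.ramificationIdx'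
          p.asIdeal P.asIdeal →
      Sum.inr p ∈ S)
    -- for each `p ∈ S`, a fixed choice of a place `p(L)` of `L` above `p`
    (PL : ∀ p ∈ S, ↥(TateNF.SL K L S))
    (hPL : ∀ (p : TateNF.PlaceOf K) (hp : p ∈ S), TateNF.LiesAbove K L (PL p hp : TateNF.PlaceOf L) p)
    -- a finite place `p0 ∈ S` whose decomposition group is all of `G`
    (p0 : TateNF.PlaceOf K) (hp0S : p0 ∈ S)
    (hp0fin : ∃ v : IsDedekindDomain.HeightOneSpectrum (NumberField.RingOfIntegers K),
      p0 = Sum.inr v)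
    (hp0full : TateNF.DecompGrp K L S (PL p0 hp0S) = ⊤)
    :
    AddSubgroup.closure
      {h : BarH1.H1 (L ≃ₐ[K] L) ↥(Xsub K L S) |
        ∃ (p : PlaceOf K) (hp : p ∈ S), p ≠ p0 ∧
          ∃ τ ∈ DecompGrp K L S (PL p hp),
            h = BarH1.H1mk (L ≃ₐ[K] L) ↥(Xsub K L S)
              (Finsupp.single τ (Xgen K L S (PL p hp) (PL p0 hp0S)))} = ⊤ := by

  classical
  rw [eq_top_iff]
  intro h htriv
  clear htriv
  induction h using QuotientAddGroup.induction_on with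
  | H x =>
    set G := L ≃ₐ[K] L
    set A := ↥(Xsub K L S)
    set target : Set (BarH1.H1 G A) :=
      {h : BarH1.H1 G A |
        ∃ (p : PlaceOf K) (hp : p ∈ S), p ≠ p0 ∧
          ∃ τ ∈ DecompGrp K L S (PL p hp),
            h = BarH1.H1mk G A
              (Finsupp.single τ (Xgen K L S (PL p hp) (PL p0 hp0S)))} with htarget
    have hgle : AddSubgroup.closure (Proof3.genSet K L S PL p0 hp0S)
        ≤ BarH1.cycles G A :=
      (AddSubgroup.closure_le _).mpr
        (Proof3.genSet_subset_cycles K L S PL p0 hp0S hp0full)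
    have main : ∀ g (hg : g ∈ AddSubgroup.closure (Proof3.genSet K L S PL p0 hp0S))
        (hgc : g ∈ BarH1.cycles G A),
        (QuotientAddGroup.mk (⟨g, hgc⟩ : ↥(BarH1.cycles G A)) : BarH1.H1 G A)
          ∈ AddSubgroup.closure target := by
      intro g hg
      induction hg using AddSubgroup.closure_induction with
      | mem y hy =>
        intro hgc
        apply AddSubgroup.subset_closure
        obtain ⟨p, hp, hne, τ, hτ, rfl⟩ := hy
        refine ⟨p, hp, hne, τ, hτ, ?_⟩
        unfold BarH1.H1mk
        simp [hgc]
        rfl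
      | zero =>
        intro hgc
        have h0 : (⟨(0 : G →₀ A), hgc⟩ : ↥(BarH1.cycles G A)) = 0 := Subtype.ext rfl
        rw [h0, QuotientAddGroup.mk_zero]
        exact zero_mem _
      | add y z hy hz ihy ihz =>
        intro hgc
        have hyc : y ∈ BarH1.cycles G A := hgle hy
        have hzc : z ∈ BarH1.cycles G A := hgle hz
        have hsplit : (⟨y + z, hgc⟩ : ↥(BarH1.cycles G A))
            = ⟨y, hyc⟩ + ⟨z, hzc⟩ := Subtype.ext rfl
        rw [hsplit, QuotientAddGroup.mk_add]
        exact add_mem (ihy hyc) (ihz hzc)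
      | neg y hy ihy =>
        intro hgc
        have hyc : y ∈ BarH1.cycles G A := hgle hy
        have hsplit : (⟨-y, hgc⟩ : ↥(BarH1.cycles G A)) = -⟨y, hyc⟩ := Subtype.ext rfl
        rw [hsplit, QuotientAddGroup.mk_neg]
        exact neg_mem (ihy hyc)
    have hxM : (x : G →₀ A) ∈ Proof3.Mprime K L S PL p0 hp0S :=
      Proof3.cycles_le_Mprime K L S PL hPL p0 hp0S hp0full x.2
    rw [Proof3.Mprime, AddSubgroup.mem_sup] at hxM
    obtain ⟨b, hb, g, hg, hbg⟩ := hxM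
    have hbc : b ∈ BarH1.cycles G A := Proof3.boundaries_le_cycles K L S hb
    have hgc : g ∈ BarH1.cycles G A := hgle hg
    have hxeq : x = (⟨b, hbc⟩ : ↥(BarH1.cycles G A)) + ⟨g, hgc⟩ :=
      Subtype.ext hbg.symm
    have hb0 : (QuotientAddGroup.mk (⟨b, hbc⟩ : ↥(BarH1.cycles G A)) : BarH1.H1 G A) = 0 :=
      (QuotientAddGroup.eq_zero_iff _).mpr
        ((AddSubgroup.mem_addSubgroupOf).mpr hb)
    rw [hxeq, QuotientAddGroup.mk_add, hb0, zero_add]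
    exact main g hg hgc
end

section
/- Under these assumptions, the short exact sequence 0 → X → Y → Z → 0 of Z[G]-modules (where Y → Z is the augmentation map and Z has trivial G-action) induces a short exact sequence 0 → H_1(G, X) → H_1(G, Y) → H_1(G, Z) → 0 of group homology: the map H_1(G, X) → H_1(G, Y) is injective and the map H_1(G, Y) → H_1(G, Z) is surjective. -/
set_option linter.unusedSectionVars false
set_option synthInstance.maxHeartbeats 1000000
set_option maxHeartbeats 1000000

namespace BarH1

variable (G : Type) [Group G]
variable {A B : Type} [AddCommGroup A] [DistribMulAction G A]
  [AddCommGroup B] [DistribMulAction G B]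

lemma d1_single (σ : G) (a : A) :
    d1 G A (Finsupp.single σ a) = σ • a - a := by
  simp [d1]

/-- The map on 1-chains induced by a homomorphism of coefficients. -/
noncomputable def chainsMap (f : A →+ B) : (G →₀ A) →+ (G →₀ B) :=
  Finsupp.mapRange.addMonoidHom f

lemma chainsMap_single (f : A →+ B) (σ : G) (a : A) :
    chainsMap G f (Finsupp.single σ a) = Finsupp.single σ (f a) :=
  Finsupp.mapRange_single (hf := map_zero f)

lemma d1_chainsMap (f : A →+ B) (hf : ∀ (σ : G) (a : A), f (σ • a) = σ • f a)
    (x : G →₀ A) : d1 G B (chainsMap G f x) = f (d1 G A x) := by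
  induction x using Finsupp.induction_linear with
  | zero => simp
  | add a b ha hb => simp only [map_add, ha, hb]
  | single σ a => rw [chainsMap_single, d1_single, d1_single, map_sub, hf]

lemma chainsMap_mem_cycles (f : A →+ B) (hf : ∀ (σ : G) (a : A), f (σ • a) = σ • f a)
    {x : G →₀ A} (hx : x ∈ cycles G A) : chainsMap G f x ∈ cycles G B := by
  rw [cycles, AddMonoidHom.mem_ker] at hx ⊢
  rw [d1_chainsMap G f hf, hx, map_zero]

lemma chainsMap_mem_boundaries (f : A →+ B) (hf : ∀ (σ : G) (a : A), f (σ • a) = σ • f a)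
    {x : G →₀ A} (hx : x ∈ boundaries G A) : chainsMap G f x ∈ boundaries G B := by
  have hle : boundaries G A ≤ (boundaries G B).comap (chainsMap G f) := by
    rw [boundaries, AddSubgroup.closure_le]
    rintro y ⟨σ, τ, a, rfl⟩
    rw [SetLike.mem_coe, AddSubgroup.mem_comap, map_add, map_sub,
      chainsMap_single, chainsMap_single, chainsMap_single, hf]
    exact AddSubgroup.subset_closure ⟨σ, τ, f a, rfl⟩
  exact hle hx

/-- The map on 1-cycles induced by a `G`-equivariant homomorphism of coefficients. -/
noncomputable def cyclesMap (f : A →+ B) (hf : ∀ (σ : G) (a : A), f (σ • a) = σ • f a) :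
    ↥(cycles G A) →+ ↥(cycles G B) :=
  AddMonoidHom.codRestrict ((chainsMap G f).comp (cycles G A).subtype) (cycles G B)
    (fun x => chainsMap_mem_cycles G f hf x.2)

/-- Functoriality of `H₁(G, −)`: the map induced by a `G`-equivariant homomorphism of
coefficients. -/
noncomputable def H1map (f : A →+ B) (hf : ∀ (σ : G) (a : A), f (σ • a) = σ • f a) :
    H1 G A →+ H1 G B :=
  QuotientAddGroup.map _ _ (cyclesMap G f hf)
    (fun x hx => by
      rw [AddSubgroup.mem_addSubgroupOf] at hx
      rw [AddSubgroup.mem_comap, AddSubgroup.mem_addSubgroupOf]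
      exact chainsMap_mem_boundaries G f hf hx)

end BarH1

namespace TateNF

open NumberField IsDedekindDomain

variable (K L : Type) [Field K] [Field L] [NumberField K] [NumberField L]
  [Algebra K L] [IsGalois K L] [FiniteDimensional K L]

variable (S : Finset (PlaceOf K))

attribute [local instance] Finsupp.comapSMul Finsupp.comapMulAction Finsupp.comapDistribMulAction

end TateNF

/-- The trivial Galois action on `ℤ`. -/
noncomputable instance (K L : Type) [Field K] [Field L] [Algebra K L] :
    DistribMulAction (L ≃ₐ[K] L) ℤ where
  smul _ n := n
  one_smul _ := rfl
  mul_smul _ _ _ := rfl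
  smul_zero _ := rfl
  smul_add _ _ _ := rfl

attribute [local instance] Finsupp.comapSMul Finsupp.comapMulAction Finsupp.comapDistribMulAction

namespace BarH1

variable (G : Type) [Group G] {A B C : Type} [AddCommGroup A] [DistribMulAction G A]
  [AddCommGroup B] [DistribMulAction G B] [AddCommGroup C] [DistribMulAction G C]

lemma coe_cyclesMap' (f : A →+ B) (hf) (x : ↥(cycles G A)) :
    (cyclesMap G f hf x : G →₀ B) = chainsMap G f (x : G →₀ A) := rfl

lemma H1map_mk' (f : A →+ B) (hf) (x : ↥(cycles G A)) :
    H1map G f hf (QuotientAddGroup.mk x) = QuotientAddGroup.mk (cyclesMap G f hf x) := rfl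

lemma H1map_congr' {f g : A →+ B} (h : f = g) (hf hg) (c : H1 G A) :
    H1map G f hf c = H1map G g hg c := by subst h; rfl

lemma H1map_id' (hf) (c : H1 G A) : H1map G (AddMonoidHom.id A) hf c = c := by
  induction c using QuotientAddGroup.induction_on with
  | H x =>
    rw [H1map_mk']
    congr 1
    ext1
    rw [coe_cyclesMap', chainsMap, Finsupp.mapRange.addMonoidHom_id]
    rfl

lemma H1map_comp' (f : A →+ B) (g : B →+ C) (hf hg hgf) (c : H1 G A) :
    H1map G (g.comp f) hgf c = H1map G g hg (H1map G f hf c) := by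
  induction c using QuotientAddGroup.induction_on with
  | H x =>
    rw [H1map_mk', H1map_mk', H1map_mk']
    congr 1
    ext1
    rw [coe_cyclesMap', coe_cyclesMap', coe_cyclesMap', chainsMap,
      Finsupp.mapRange.addMonoidHom_comp]
    rfl

lemma chainsMap_add' (f g : A →+ B) (x : G →₀ A) :
    chainsMap G (f + g) x = chainsMap G f x + chainsMap G g x := by
  induction x using Finsupp.induction_linear with
  | zero => simp
  | add a b ha hb =>
      simp only [map_add, ha, hb]; abel
  | single σ a =>
      rw [chainsMap_single, chainsMap_single, chainsMap_single,
        AddMonoidHom.add_apply, Finsupp.single_add]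

lemma H1map_add' (f g : A →+ B) (hf hg hfg) (c : H1 G A) :
    H1map G (f + g) hfg c = H1map G f hf c + H1map G g hg c := by
  induction c using QuotientAddGroup.induction_on with
  | H x =>
    rw [H1map_mk', H1map_mk', H1map_mk']
    show _ = QuotientAddGroup.mk (cyclesMap G f hf x + cyclesMap G g hg x)
    congr 1
    ext1
    show (cyclesMap G (f + g) hfg x : G →₀ B) = _
    rw [coe_cyclesMap', chainsMap_add']
    rfl

lemma H1map_zero' (hz) (c : H1 G A) : H1map G (0 : A →+ B) hz c = 0 := by
  induction c using QuotientAddGroup.induction_on with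
  | H x =>
    rw [H1map_mk']
    have : cyclesMap G (0 : A →+ B) hz x = 0 := by
      ext1
      show chainsMap G (0 : A →+ B) (x : G →₀ A) = 0
      ext a
      simp [chainsMap]
    rw [this]
    rfl

end BarH1

open TateNF in
theorem homology_seq_X_Y_Z_exact
    (K L : Type) [Field K] [Field L] [NumberField K] [NumberField L]
    [Algebra K L] [IsGalois K L] [FiniteDimensional K L]
    (S : Finset (TateNF.PlaceOf K))
    -- `S` contains all the infinite places of `K`
    (hSinf : ∀ w : NumberField.InfinitePlace K, Sum.inl w ∈ S)
    -- `S` contains all the finite places of `K` that ramify in `L/K`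
    (hSram : ∀ (p : IsDedekindDomain.HeightOneSpectrum (NumberField.RingOfIntegers K))
      (P : IsDedekindDomain.HeightOneSpectrum (NumberField.RingOfIntegers L)),
      P.asIdeal.comap (algebraMap (NumberField.RingOfIntegers K) (NumberField.RingOfIntegers L))
          = p.asIdeal →
      1 < Ideal.ramificationIdx'
          p.asIdeal P.asIdeal →
      Sum.inr p ∈ S)
    -- for each `p ∈ S`, a fixed choice of a place `p(L)` of `L` above `p`
    (PL : ∀ p ∈ S, ↥(TateNF.SL K L S))
    (hPL : ∀ (p : TateNF.PlaceOf K) (hp : p ∈ S), TateNF.LiesAbove K L (PL p hp : TateNF.PlaceOf L) p)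
    -- a finite place `p0 ∈ S` whose decomposition group is all of `G`
    (p0 : TateNF.PlaceOf K) (hp0S : p0 ∈ S)
    (hp0fin : ∃ v : IsDedekindDomain.HeightOneSpectrum (NumberField.RingOfIntegers K),
      p0 = Sum.inr v)
    (hp0full : TateNF.DecompGrp K L S (PL p0 hp0S) = ⊤)
    :
    Function.Injective
      (BarH1.H1map (L ≃ₐ[K] L)
        ((Xsub K L S).subtype : ↥(Xsub K L S) →+ Y K L S) (fun _ _ => rfl)) ∧
    Function.Exact
      (BarH1.H1map (L ≃ₐ[K] L)
        ((Xsub K L S).subtype : ↥(Xsub K L S) →+ Y K L S) (fun _ _ => rfl))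
      (BarH1.H1map (L ≃ₐ[K] L) (augY K L S) (fun σ f => augY_smul K L S σ f)) ∧
    Function.Surjective
      (BarH1.H1map (L ≃ₐ[K] L) (augY K L S) (fun σ f => augY_smul K L S σ f)) := by
  classical
  -- The chosen place above `p0` is fixed by the whole Galois group.
  have hfix : ∀ σ : L ≃ₐ[K] L, σ • (PL p0 hp0S) = PL p0 hp0S := fun σ => by
    have h : σ ∈ DecompGrp K L S (PL p0 hp0S) := hp0full.ge (Subgroup.mem_top σ)
    exact Subtype.ext (MulAction.mem_stabilizer_iff.mp h)
  -- The splitting `s : ℤ → Y`, `n ↦ n · P0`, is `G`-equivariant.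
  set s : ℤ →+ Y K L S := Finsupp.singleAddHom (PL p0 hp0S) with hsdef
  have hs : ∀ (σ : L ≃ₐ[K] L) (n : ℤ), s (σ • n) = σ • s n := fun σ n => by
    show Finsupp.single (PL p0 hp0S) n = σ • Finsupp.single (PL p0 hp0S) n
    rw [Finsupp.comapSMul_single, hfix]
  have haugs : ∀ n : ℤ, augY K L S (s n) = n := fun n => by
    show augY K L S (Finsupp.single (PL p0 hp0S) n) = n
    simp [augY]
  -- The retraction `r : Y → X`, `y ↦ y - s (aug y)`.
  have hmem : ∀ y : Y K L S, y - s (augY K L S y) ∈ Xsub K L S := fun y => by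
    rw [mem_Xsub, map_sub, haugs, sub_self]
  set r : Y K L S →+ ↥(Xsub K L S) :=
    (AddMonoidHom.id (Y K L S) - s.comp (augY K L S)).codRestrict (Xsub K L S)
      (fun y => hmem y) with hrdef
  have hr_coe : ∀ y : Y K L S, ((r y : ↥(Xsub K L S)) : Y K L S) = y - s (augY K L S y) :=
    fun _ => rfl
  have hr : ∀ (σ : L ≃ₐ[K] L) (y : Y K L S), r (σ • y) = σ • r y := fun σ y =>
    Subtype.ext (by
      show σ • y - s (augY K L S (σ • y)) = σ • (y - s (augY K L S y))
      rw [augY_smul, @smul_sub (L ≃ₐ[K] L) (Y K L S) _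
        (@DistribMulAction.toDistribSMul _ _ _ _ Finsupp.comapDistribMulAction) σ y
        (s (augY K L S y))]
      congr 1
      exact hs σ (augY K L S y))
  -- equivariance of the various composite maps
  have hrsub : ∀ (σ : L ≃ₐ[K] L) (x : ↥(Xsub K L S)),
      (r.comp (Xsub K L S).subtype) (σ • x) = σ • (r.comp (Xsub K L S).subtype) x :=
    fun σ x => hr σ ((Xsub K L S).subtype x)
  have hsub_r : ∀ (σ : L ≃ₐ[K] L) (y : Y K L S),
      (((Xsub K L S).subtype).comp r) (σ • y) = σ • (((Xsub K L S).subtype).comp r) y :=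
    fun σ y => congrArg Subtype.val (hr σ y)
  have hsaug : ∀ (σ : L ≃ₐ[K] L) (y : Y K L S),
      (s.comp (augY K L S)) (σ • y) = σ • (s.comp (augY K L S)) y := fun σ y => by
    show s (augY K L S (σ • y)) = σ • s (augY K L S y)
    rw [augY_smul]
    exact hs σ (augY K L S y)
  have hsum : ∀ (σ : L ≃ₐ[K] L) (y : Y K L S),
      (((Xsub K L S).subtype).comp r + s.comp (augY K L S)) (σ • y) =
        σ • (((Xsub K L S).subtype).comp r + s.comp (augY K L S)) y := fun σ y => by
    rw [AddMonoidHom.add_apply, AddMonoidHom.add_apply, hsub_r, hsaug]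
    exact (@smul_add (L ≃ₐ[K] L) (Y K L S) _
      (@DistribMulAction.toDistribSMul _ _ _ _ (Finsupp.comapDistribMulAction)) σ
      ((((Xsub K L S).subtype).comp r) y) ((s.comp (augY K L S)) y)).symm
  have haugsub : ∀ (σ : L ≃ₐ[K] L) (x : ↥(Xsub K L S)),
      ((augY K L S).comp (Xsub K L S).subtype) (σ • x) =
        σ • ((augY K L S).comp (Xsub K L S).subtype) x := fun σ x =>
    augY_smul K L S σ (x : Y K L S)
  have haugs_eq : ∀ (σ : L ≃ₐ[K] L) (n : ℤ),
      ((augY K L S).comp s) (σ • n) = σ • ((augY K L S).comp s) n := fun _ _ => rfl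
  -- map identities
  have hcomp1eq : r.comp ((Xsub K L S).subtype) = AddMonoidHom.id ↥(Xsub K L S) := by
    refine AddMonoidHom.ext fun x => Subtype.ext ?_
    show ((x : Y K L S)) - s (augY K L S (x : Y K L S)) = (x : Y K L S)
    have hx : augY K L S (x : Y K L S) = 0 := x.2
    rw [hx, map_zero, sub_zero]
  have hsplit : ((Xsub K L S).subtype).comp r + s.comp (augY K L S) =
      AddMonoidHom.id (Y K L S) := by
    refine AddMonoidHom.ext fun y => ?_
    show (y - s (augY K L S y)) + s (augY K L S y) = y
    abel
  have haugseq : (augY K L S).comp s = AddMonoidHom.id ℤ :=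
    AddMonoidHom.ext fun n => haugs n
  have hzeroeq : (augY K L S).comp ((Xsub K L S).subtype) = 0 :=
    AddMonoidHom.ext fun x => x.2
  -- key homology-level identities
  have hli : ∀ c, BarH1.H1map (L ≃ₐ[K] L) r hr
      (BarH1.H1map (L ≃ₐ[K] L) ((Xsub K L S).subtype) (fun _ _ => rfl) c) = c := fun c => by
    rw [← BarH1.H1map_comp' (L ≃ₐ[K] L) ((Xsub K L S).subtype) r (fun _ _ => rfl) hr hrsub c,
      BarH1.H1map_congr' (L ≃ₐ[K] L) hcomp1eq hrsub (fun _ _ => rfl) c,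
      BarH1.H1map_id' (L ≃ₐ[K] L) (fun _ _ => rfl) c]
  have hri : ∀ c, BarH1.H1map (L ≃ₐ[K] L) (augY K L S) (fun σ f => augY_smul K L S σ f)
      (BarH1.H1map (L ≃ₐ[K] L) s hs c) = c := fun c => by
    rw [← BarH1.H1map_comp' (L ≃ₐ[K] L) s (augY K L S) hs
        (fun σ f => augY_smul K L S σ f) haugs_eq c,
      BarH1.H1map_congr' (L ≃ₐ[K] L) haugseq haugs_eq (fun _ _ => rfl) c,
      BarH1.H1map_id' (L ≃ₐ[K] L) (fun _ _ => rfl) c]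
  have hcomp0 : ∀ c, BarH1.H1map (L ≃ₐ[K] L) (augY K L S) (fun σ f => augY_smul K L S σ f)
      (BarH1.H1map (L ≃ₐ[K] L) ((Xsub K L S).subtype) (fun _ _ => rfl) c) = 0 := fun c => by
    rw [← BarH1.H1map_comp' (L ≃ₐ[K] L) ((Xsub K L S).subtype) (augY K L S)
        (fun _ _ => rfl) (fun σ f => augY_smul K L S σ f) haugsub c,
      BarH1.H1map_congr' (L ≃ₐ[K] L) hzeroeq haugsub
        (fun σ x => by simp only [AddMonoidHom.zero_apply]; rfl) c,
      BarH1.H1map_zero' (L ≃ₐ[K] L) _ c]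
  have hdecomp : ∀ c : BarH1.H1 (L ≃ₐ[K] L) (Y K L S),
      BarH1.H1map (L ≃ₐ[K] L) ((Xsub K L S).subtype) (fun _ _ => rfl)
        (BarH1.H1map (L ≃ₐ[K] L) r hr c) +
      BarH1.H1map (L ≃ₐ[K] L) s hs
        (BarH1.H1map (L ≃ₐ[K] L) (augY K L S) (fun σ f => augY_smul K L S σ f) c) = c :=
    fun c => by
      rw [← BarH1.H1map_comp' (L ≃ₐ[K] L) r ((Xsub K L S).subtype) hr (fun _ _ => rfl)
          hsub_r c,
        ← BarH1.H1map_comp' (L ≃ₐ[K] L) (augY K L S) s (fun σ f => augY_smul K L S σ f)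
          hs hsaug c,
        ← BarH1.H1map_add' (L ≃ₐ[K] L) _ _ hsub_r hsaug hsum c,
        BarH1.H1map_congr' (L ≃ₐ[K] L) hsplit hsum (fun _ _ => rfl) c,
        BarH1.H1map_id' (L ≃ₐ[K] L) (fun _ _ => rfl) c]
  refine ⟨?_, ?_, ?_⟩
  · -- injectivity
    exact Function.LeftInverse.injective (g := BarH1.H1map (L ≃ₐ[K] L) r hr) hli
  · -- exactness
    intro c
    constructor
    · intro h
      refine ⟨BarH1.H1map (L ≃ₐ[K] L) r hr c, ?_⟩
      have := hdecomp c
      rw [h, map_zero, add_zero] at this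
      exact this
    · rintro ⟨x, rfl⟩
      exact hcomp0 x
  · -- surjectivity
    exact fun c => ⟨BarH1.H1map (L ≃ₐ[K] L) s hs c, hri c⟩
end

section
/- Let L/K be a Galois extension of number fields. If there exists a finite place p of K whose decomposition group is all of Gal(L/K) (equivalently, exactly one place of L lies above p), then the group Gal(L/K) is solvable. -/
set_option linter.unusedSectionVars false
set_option synthInstance.maxHeartbeats 1000000
set_option maxHeartbeats 1000000

namespace TateAux


/- Derived series helper -/
lemma solvable_of_derived_two_le {G : Type*} [Group G] (H : Subgroup G)
    (hs : IsSolvable H) (h2 : derivedSeries G 2 ≤ H) : IsSolvable G := by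
  obtain ⟨n, hn⟩ := hs.solvable
  have key : ∀ m, derivedSeries G (2 + m) ≤ (derivedSeries H m).map H.subtype := by
    intro m
    induction m with
    | zero =>
      rw [derivedSeries_zero, ← MonoidHom.range_eq_map, Subgroup.range_subtype]
      exact h2
    | succ m ih =>
      have : 2 + (m + 1) = (2 + m) + 1 := rfl
      rw [this, derivedSeries_succ, derivedSeries_succ, Subgroup.map_commutator]
      exact Subgroup.commutator_mono ih ih
  refine ⟨⟨2 + n, le_bot_iff.mp ?_⟩⟩
  simpa [hn, Subgroup.map_bot] using key n

/- Automorphism group of a finite field is commutative. -/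
lemma ringAut_comm {κ : Type*} [Field κ] [Finite κ] (f h : κ ≃+* κ) : f * h = h * f := by
  obtain ⟨g, hg⟩ := IsCyclic.exists_generator (α := κˣ)
  have hval : ∀ e : κ ≃+* κ, ∃ k : ℤ, e (g : κ) = (g : κ) ^ k := by
    intro e
    obtain ⟨u, hu⟩ := g.isUnit.map e
    obtain ⟨k, hk⟩ := hg u
    exact ⟨k, by rw [← hu, ← hk, Units.val_zpow_eq_zpow_val]⟩
  obtain ⟨a, ha⟩ := hval f
  obtain ⟨b, hb⟩ := hval h
  ext x
  show f (h x) = h (f x)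
  rcases eq_or_ne x 0 with rfl | hx
  · simp
  · obtain ⟨u, rfl⟩ := IsUnit.mk0 x hx
    obtain ⟨k, hk⟩ := hg u
    have hk' : (u : κ) = (g : κ) ^ k := by rw [← hk]; exact Units.val_zpow_eq_zpow_val g k
    rw [hk']
    simp only [map_zpow₀, ha, hb, ← zpow_mul]
    congr 1
    ring


/- An automorphism preserving 𝔭 preserves its powers -/
lemma map_pow_mem {B : Type*} [CommRing B] (𝔭 : Ideal B) (s : B ≃+* B)
    (hs : ∀ x ∈ 𝔭, s x ∈ 𝔭) : ∀ (j : ℕ), ∀ z ∈ 𝔭 ^ j, s z ∈ 𝔭 ^ j := by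
  intro j z hz
  have hle : Ideal.map (s : B →+* B) 𝔭 ≤ 𝔭 := Ideal.map_le_iff_le_comap.mpr fun x hx => hs x hx
  have : Ideal.map (s : B →+* B) (𝔭 ^ j) ≤ 𝔭 ^ j := by
    rw [Ideal.map_pow]
    exact Ideal.pow_right_mono hle j
  exact this (Ideal.mem_map_of_mem _ hz)

/- Serre's lemma: if s ≡ id mod 𝔭^n then s ≡ id mod 𝔭^(n+k) on 𝔭^(k+1) -/
lemma sub_mem_pow_of_mem_pow {B : Type*} [CommRing B] (𝔭 : Ideal B) (s : B ≃+* B)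
    (hs : ∀ x ∈ 𝔭, s x ∈ 𝔭) {n : ℕ} (hn : ∀ x : B, s x - x ∈ 𝔭 ^ n) :
    ∀ (k : ℕ), ∀ y ∈ 𝔭 ^ (k + 1), s y - y ∈ 𝔭 ^ (n + k) := by
  intro k
  induction k with
  | zero => intro y _; simpa using hn y
  | succ k ih =>
    intro y hy
    rw [pow_succ] at hy
    refine Submodule.mul_induction_on hy ?_ ?_
    · intro m hm q hq
      have h1 : s m * (s q - q) ∈ 𝔭 ^ (n + (k + 1)) := by
        have : 𝔭 ^ (k + 1) * 𝔭 ^ n ≤ 𝔭 ^ (n + (k + 1)) := by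
          rw [← pow_add, add_comm]
        exact this (Ideal.mul_mem_mul (map_pow_mem 𝔭 s hs (k + 1) m hm) (hn q))
      have h2 : q * (s m - m) ∈ 𝔭 ^ (n + (k + 1)) := by
        have : 𝔭 * 𝔭 ^ (n + k) ≤ 𝔭 ^ (n + (k + 1)) := by
          rw [← pow_succ']
          exact Ideal.pow_le_pow_right (by omega)
        exact this (Ideal.mul_mem_mul hq (ih m hm))
      have : s (m * q) - m * q = s m * (s q - q) + q * (s m - m) := by
        rw [map_mul]; ring
      rw [this]
      exact Ideal.add_mem _ h1 h2
    · intro a b ha hb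
      have : s (a + b) - (a + b) = (s a - a) + (s b - b) := by rw [map_add]; ring
      rw [this]
      exact Ideal.add_mem _ ha hb

/- Torsion kill: an automorphism in wild inertia of order prime to p is trivial. -/
lemma eq_id_of_coprime_order {B : Type*} [CommRing B] [IsDedekindDomain B]
    (𝔭 : Ideal B) (hmax : 𝔭.IsMaximal) (s : B ≃+* B)
    (hs : ∀ x ∈ 𝔭, s x ∈ 𝔭) (hI : ∀ x : B, s x - x ∈ 𝔭)
    (hW : ∀ y ∈ 𝔭, s y - y ∈ 𝔭 ^ 2) {m : ℕ}
    (hsm : ∀ x : B, (s ^ m) x = x) (hmp : ((m : ℕ) : B) ∉ 𝔭) :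
    ∀ x : B, s x = x := by
  have hprimary : ∀ j : ℕ, (𝔭 ^ (j + 1)).IsPrimary := by
    intro j
    apply Ideal.isPrimary_of_isMaximal_radical
    rw [Ideal.radical_pow 𝔭 (Nat.succ_ne_zero j), hmax.isPrime.radical]
    exact hmax
  have hpowapp : ∀ (k : ℕ) (x : B), (s ^ (k + 1)) x = s ((s ^ k) x) := by
    intro k x
    rw [pow_succ']
    rfl
  have claim : ∀ n : ℕ, ∀ x : B, s x - x ∈ 𝔭 ^ (n + 1) := by
    intro n
    induction n with
    | zero => intro x; simpa using hI x
    | succ n ih =>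
      have key1 : ∀ (k : ℕ) (x : B), (s ^ k) x - x ∈ 𝔭 ^ (n + 1) := by
        intro k
        induction k with
        | zero =>
          intro x
          have h0 : ((s ^ 0) x : B) = x := rfl
          rw [h0, sub_self]
          exact Submodule.zero_mem _
        | succ k ihk =>
          intro x
          have : (s ^ (k + 1)) x - x = (s ((s ^ k) x) - (s ^ k) x) + ((s ^ k) x - x) := by
            rw [hpowapp]; ring
          rw [this]
          exact Ideal.add_mem _ (ih _) (ihk x)
      have key2 : ∀ z ∈ 𝔭 ^ (n + 1), s z - z ∈ 𝔭 ^ (n + 2) := by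
        intro z hz
        match n with
        | 0 => exact hW z (by simpa using hz)
        | n + 1 =>
          have := sub_mem_pow_of_mem_pow 𝔭 s hs (n := n + 2) ih (n + 1) z hz
          exact Ideal.pow_le_pow_right (by omega) this
      have key3 : ∀ (k : ℕ) (x : B),
          (s ^ k) x - x - (k : B) * (s x - x) ∈ 𝔭 ^ (n + 2) := by
        intro k
        induction k with
        | zero =>
          intro x
          have h0 : ((s ^ 0) x : B) = x := rfl
          rw [h0]
          simp
        | succ k ihk =>
          intro x
          have hz := key2 _ (key1 k x)
          have : (s ^ (k + 1)) x - x - ((k + 1 : ℕ) : B) * (s x - x) =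
              (s ((s ^ k) x - x) - ((s ^ k) x - x)) +
              ((s ^ k) x - x - (k : B) * (s x - x)) := by
            rw [hpowapp, map_sub]
            push_cast
            ring
          rw [this]
          exact Ideal.add_mem _ hz (ihk x)
      intro x
      have hm : ((m : ℕ) : B) * (s x - x) ∈ 𝔭 ^ (n + 2) := by
        have := key3 m x
        rw [hsm x] at this
        simpa using this
      have := ((Ideal.isPrimary_iff.mp (hprimary (n + 1))).2
        (by rw [mul_comm] at hm; exact hm))
      rcases this with h | h
      · exact h
      · exfalso
        apply hmp
        have : (𝔭 ^ (n + 2)).radical = 𝔭 := by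
          rw [Ideal.radical_pow 𝔭 (by omega), hmax.isPrime.radical]
        rwa [this] at h
  intro x
  have hbot : s x - x ∈ (⊥ : Ideal B) := by
    have h1 : s x - x ∈ ⨅ j : ℕ, 𝔭 ^ j := by
      refine (Submodule.mem_iInf _).mpr fun j => ?_
      match j with
      | 0 => simp
      | j + 1 => exact claim j x
    rwa [Ideal.iInf_pow_eq_bot_of_isDomain 𝔭 hmax.ne_top] at h1
  exact sub_eq_zero.mp (Ideal.mem_bot.mp hbot)
  

/- In a Dedekind domain, a nonzero prime is generated by one element mod its square. -/
lemma exists_generator_mod_sq {B : Type*} [CommRing B] [IsDedekindDomain B]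
    (𝔭 : Ideal B) (hp : 𝔭.IsPrime) (hb : 𝔭 ≠ ⊥) :
    ∃ π ∈ 𝔭, 𝔭 ≤ Ideal.span {π} ⊔ 𝔭 ^ 2 := by
  have hne : 𝔭 ^ 2 ≠ 𝔭 := by
    intro h
    have h1 : 𝔭 * 𝔭 = 𝔭 * 1 := by rw [mul_one, ← pow_two]; exact h
    have h2 : 𝔭 = 1 := mul_left_cancel₀ (by simpa using hb) h1
    exact hp.ne_top (by simpa [Ideal.one_eq_top] using h2)
  have hlt : 𝔭 ^ 2 < 𝔭 := lt_of_le_of_ne (Ideal.pow_le_self two_ne_zero) hne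
  obtain ⟨π, hπ𝔭, hπ2⟩ := SetLike.exists_of_lt hlt
  set J := Ideal.span {π} ⊔ 𝔭 ^ 2 with hJ
  have hπJ : π ∈ J := (le_sup_left : Ideal.span {π} ≤ J) (Ideal.mem_span_singleton_self π)
  have hJle : J ≤ 𝔭 := sup_le (by rwa [Ideal.span_le, Set.singleton_subset_iff])
    (Ideal.pow_le_self two_ne_zero)
  obtain ⟨J', hJ'⟩ := Ideal.dvd_iff_le.mpr hJle
  have h2 : J ∣ 𝔭 * 𝔭 := by
    rw [← pow_two]
    exact Ideal.dvd_iff_le.mpr le_sup_right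
  have hJ'dvd : J' ∣ 𝔭 := by
    have : 𝔭 * J' ∣ 𝔭 * 𝔭 := hJ' ▸ h2
    exact (mul_dvd_mul_iff_left (show 𝔭 ≠ 0 by simpa using hb)).mp this
  obtain ⟨c, hc⟩ := hJ'dvd
  have hirr : Irreducible 𝔭 := (Ideal.prime_of_isPrime hb hp).irreducible
  rcases hirr.isUnit_or_isUnit hc with h | h
  · have : J' = ⊤ := Ideal.isUnit_iff.mp h
    refine ⟨π, hπ𝔭, ?_⟩
    rw [← hJ, hJ', this, Ideal.mul_top]
  · exfalso
    have hc1 : c = ⊤ := Ideal.isUnit_iff.mp h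
    rw [hc1, Ideal.mul_top] at hc
    rw [← hc, ← pow_two] at hJ'
    exact hπ2 (hJ' ▸ hπJ)

/- key commutator computation -/
lemma comm_mem_sq {B : Type*} [CommRing B] (𝔭 : Ideal B) (π : B) (hπ : π ∈ 𝔭)
    (hgen : 𝔭 ≤ Ideal.span {π} ⊔ 𝔭 ^ 2) (σ τ : B ≃+* B)
    (hσ𝔭 : ∀ x ∈ 𝔭, σ x ∈ 𝔭) (hτ𝔭 : ∀ x ∈ 𝔭, τ x ∈ 𝔭)
    (hσI : ∀ x : B, σ x - x ∈ 𝔭) (hτI : ∀ x : B, τ x - x ∈ 𝔭) :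
    ∀ u ∈ 𝔭, σ (τ u) - τ (σ u) ∈ 𝔭 ^ 2 := by
  have hsq : ∀ (f : B ≃+* B), (∀ x ∈ 𝔭, f x ∈ 𝔭) → ∀ z ∈ 𝔭 ^ 2, f z ∈ 𝔭 ^ 2 := by
    intro f hf z hz
    exact map_pow_mem 𝔭 f hf 2 z hz
  -- decompose a member of 𝔭 as b * π + z with z ∈ 𝔭^2
  have hdec : ∀ u ∈ 𝔭, ∃ b : B, ∃ z ∈ 𝔭 ^ 2, u = b * π + z := by
    intro u hu
    obtain ⟨y, hy, z, hz, hyz⟩ := Submodule.mem_sup.mp (hgen hu)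
    obtain ⟨b, hb⟩ := Ideal.mem_span_singleton'.mp hy
    exact ⟨b, z, hz, by rw [← hyz, ← hb]⟩
  obtain ⟨c, z₁, hz₁, hτπ⟩ := hdec (τ π) (hτ𝔭 π hπ)
  obtain ⟨d, z₂, hz₂, hσπ⟩ := hdec (σ π) (hσ𝔭 π hπ)
  -- key : f (h π) - a * b' * π ∈ 𝔭² when h π = a π + z, f π = b' π + w
  have key : ∀ (f h : B ≃+* B), (∀ x : B, f x - x ∈ 𝔭) → (∀ x ∈ 𝔭, f x ∈ 𝔭) →
      ∀ (a b' z w : B), z ∈ 𝔭 ^ 2 → w ∈ 𝔭 ^ 2 → h π = a * π + z → f π = b' * π + w →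
      f (h π) - a * b' * π ∈ 𝔭 ^ 2 := by
    intro f h hfI hf𝔭 a b' z w hz hw hh hfπ
    have hexp : f (h π) - a * b' * π =
        (f a - a) * (b' * π) + (f a - a) * w + a * w + f z := by
      rw [hh, map_add, map_mul, hfπ]; ring
    rw [hexp]
    refine Ideal.add_mem _ (Ideal.add_mem _ (Ideal.add_mem _ ?_ ?_) ?_) ?_
    · have : (f a - a) * (b' * π) = (f a - a) * b' * π := by ring
      rw [this, pow_two]
      exact Ideal.mul_mem_mul (Ideal.mul_mem_right _ _ (hfI a)) hπ
    · exact Ideal.mul_mem_left _ _ hw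
    · exact Ideal.mul_mem_left _ _ hw
    · exact hsq f hf𝔭 z hz
  have hστπ : σ (τ π) - c * d * π ∈ 𝔭 ^ 2 := key σ τ hσI hσ𝔭 c d z₁ z₂ hz₁ hz₂ hτπ hσπ
  have hτσπ : τ (σ π) - d * c * π ∈ 𝔭 ^ 2 := key τ σ hτI hτ𝔭 d c z₂ z₁ hz₂ hz₁ hσπ hτπ
  have hππ : σ (τ π) - τ (σ π) ∈ 𝔭 ^ 2 := by
    have : σ (τ π) - τ (σ π) = (σ (τ π) - c * d * π) - (τ (σ π) - d * c * π) := by ring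
    rw [this]
    exact Ideal.sub_mem _ hστπ hτσπ
  intro u hu
  obtain ⟨b, z, hz, rfl⟩ := hdec u hu
  have hza : σ (τ z) - τ (σ z) ∈ 𝔭 ^ 2 :=
    Ideal.sub_mem _ (hsq σ hσ𝔭 _ (hsq τ hτ𝔭 z hz)) (hsq τ hτ𝔭 _ (hsq σ hσ𝔭 z hz))
  have hbdiff : σ (τ b) - τ (σ b) ∈ 𝔭 := by
    have h1 : σ (τ b) - b = (σ (τ b) - τ b) + (τ b - b) := by ring
    have h2 : τ (σ b) - b = (τ (σ b) - σ b) + (σ b - b) := by ring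
    have h3 : σ (τ b) - τ (σ b) = (σ (τ b) - b) - (τ (σ b) - b) := by ring
    rw [h3, h1, h2]
    exact Ideal.sub_mem _ (Ideal.add_mem _ (hσI _) (hτI _)) (Ideal.add_mem _ (hτI _) (hσI _))
  have hmain : σ (τ (b * π)) - τ (σ (b * π)) ∈ 𝔭 ^ 2 := by
    have hexp : σ (τ (b * π)) - τ (σ (b * π)) =
        σ (τ b) * (σ (τ π) - τ (σ π)) + τ (σ π) * (σ (τ b) - τ (σ b)) := by
      rw [map_mul, map_mul, map_mul, map_mul]; ring
    rw [hexp]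
    refine Ideal.add_mem _ (Ideal.mul_mem_left _ _ hππ) ?_
    rw [pow_two]
    exact Ideal.mul_mem_mul (hτ𝔭 _ (hσ𝔭 π hπ)) hbdiff
  have hfinal : σ (τ (b * π + z)) - τ (σ (b * π + z)) =
      (σ (τ (b * π)) - τ (σ (b * π))) + (σ (τ z) - τ (σ z)) := by
    rw [map_add, map_add, map_add, map_add]; ring
  rw [hfinal]
  exact Ideal.add_mem _ hmain hza


open Subgroup commutatorElement in
theorem isSolvable_of_action {B : Type*} [CommRing B] [IsDedekindDomain B]
    {G : Type*} [Group G] [Finite G] (g : G →* (B ≃+* B))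
    (hinj : Function.Injective g)
    (𝔭 : Ideal B) (hp : 𝔭.IsPrime) (hb : 𝔭 ≠ ⊥) (hfinq : Finite (B ⧸ 𝔭))
    (hfix : ∀ σ (x : B), x ∈ 𝔭 → g σ x ∈ 𝔭) :
    IsSolvable G := by
  classical
  have hmax : 𝔭.IsMaximal := hp.isMaximal hb
  haveI := hmax
  letI : Field (B ⧸ 𝔭) := Ideal.Quotient.field 𝔭
  -- basic applications of g
  have hmulapp : ∀ (σ τ : G) (x : B), g (σ * τ) x = g σ (g τ x) := by
    intro σ τ x
    rw [map_mul]
    rfl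
  have hinvapp : ∀ (σ : G) (x : B), g σ (g σ⁻¹ x) = x := by
    intro σ x
    rw [← hmulapp, mul_inv_cancel, map_one]
    rfl
  -- the ideal is preserved exactly
  have hmapeq : ∀ σ : G, Ideal.map ((g σ : B ≃+* B) : B →+* B) 𝔭 = 𝔭 := by
    intro σ
    apply le_antisymm
    · exact Ideal.map_le_iff_le_comap.mpr fun x hx => hfix σ x hx
    · intro x hx
      have : x = g σ (g σ⁻¹ x) := (hinvapp σ x).symm
      rw [this]
      exact Ideal.mem_map_of_mem _ (hfix σ⁻¹ x hx)
  -- the homomorphism to the residue field automorphisms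
  let φ : G →* ((B ⧸ 𝔭) ≃+* (B ⧸ 𝔭)) :=
    { toFun := fun σ => Ideal.quotientEquiv 𝔭 𝔭 (g σ) (hmapeq σ).symm
      map_one' := by
        ext q
        obtain ⟨x, rfl⟩ := Ideal.Quotient.mk_surjective q
        show Ideal.quotientEquiv 𝔭 𝔭 (g 1) (hmapeq 1).symm (Ideal.Quotient.mk 𝔭 x) = _
        rw [Ideal.quotientEquiv_mk, map_one]
        rfl
      map_mul' := by
        intro σ τ
        ext q
        obtain ⟨x, rfl⟩ := Ideal.Quotient.mk_surjective q
        show Ideal.Quotient.mk 𝔭 (g (σ * τ) x) =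
          Ideal.quotientEquiv 𝔭 𝔭 (g σ) (hmapeq σ).symm
            (Ideal.quotientEquiv 𝔭 𝔭 (g τ) (hmapeq τ).symm (Ideal.Quotient.mk 𝔭 x))
        rw [Ideal.quotientEquiv_mk, Ideal.quotientEquiv_mk, hmulapp] }
  have hφ_apply : ∀ (σ : G) (x : B), φ σ (Ideal.Quotient.mk 𝔭 x) = Ideal.Quotient.mk 𝔭 (g σ x) :=
    fun σ x => Ideal.quotientEquiv_mk 𝔭 𝔭 (g σ) (hmapeq σ).symm x
  have hker : ∀ σ : G, σ ∈ φ.ker ↔ ∀ x : B, g σ x - x ∈ 𝔭 := by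
    intro σ
    rw [MonoidHom.mem_ker]
    constructor
    · intro h x
      have := DFunLike.congr_fun h (Ideal.Quotient.mk 𝔭 x)
      rw [hφ_apply] at this
      rw [← Ideal.Quotient.mk_eq_mk_iff_sub_mem]
      exact this
    · intro h
      ext q
      obtain ⟨x, rfl⟩ := Ideal.Quotient.mk_surjective q
      show φ σ (Ideal.Quotient.mk 𝔭 x) = Ideal.Quotient.mk 𝔭 x
      rw [hφ_apply, Ideal.Quotient.mk_eq_mk_iff_sub_mem]
      exact h x
  -- the characteristic
  haveI : Fintype (B ⧸ 𝔭) := Fintype.ofFinite _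
  set p := ringChar (B ⧸ 𝔭) with hpchar
  have hp_prime : p.Prime := CharP.char_is_prime (B ⧸ 𝔭) p
  -- the uniformizer
  obtain ⟨π, hπ𝔭, hπgen⟩ := exists_generator_mod_sq 𝔭 hp hb
  -- the wild inertia subgroup
  have hone : ∀ x : B, g 1 x = x := fun x => by rw [map_one]; rfl
  let W : Subgroup G :=
    { carrier := {σ : G | (∀ x : B, g σ x - x ∈ 𝔭) ∧ ∀ y ∈ 𝔭, g σ y - y ∈ 𝔭 ^ 2}
      one_mem' := by
        constructor
        · intro x
          rw [hone, sub_self]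
          exact Submodule.zero_mem _
        · intro y _
          rw [hone, sub_self]
          exact Submodule.zero_mem _
      mul_mem' := by
        rintro σ τ ⟨hσ1, hσ2⟩ ⟨hτ1, hτ2⟩
        constructor
        · intro x
          have hexp : g (σ * τ) x - x = (g σ (g τ x) - g τ x) + (g τ x - x) := by
            rw [hmulapp]; ring
          rw [hexp]
          exact Ideal.add_mem _ (hσ1 _) (hτ1 x)
        · intro y hy
          have hexp : g (σ * τ) y - y = (g σ (g τ y) - g τ y) + (g τ y - y) := by
            rw [hmulapp]; ring
          rw [hexp]
          exact Ideal.add_mem _ (hσ2 _ (hfix τ y hy)) (hτ2 y hy)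
      inv_mem' := by
        rintro σ ⟨h1, h2⟩
        constructor
        · intro x
          have := h1 (g σ⁻¹ x)
          rw [hinvapp] at this
          have hexp : g σ⁻¹ x - x = -(x - g σ⁻¹ x) := by ring
          rw [hexp]
          exact Submodule.neg_mem _ this
        · intro y hy
          have := h2 (g σ⁻¹ y) (hfix σ⁻¹ y hy)
          rw [hinvapp] at this
          have hexp : g σ⁻¹ y - y = -(y - g σ⁻¹ y) := by ring
          rw [hexp]
          exact Submodule.neg_mem _ this }
  have hWmem : ∀ σ : G,
      σ ∈ W ↔ ((∀ x : B, g σ x - x ∈ 𝔭) ∧ ∀ y ∈ 𝔭, g σ y - y ∈ 𝔭 ^ 2) :=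
    fun σ => Iff.rfl
  -- W is a p-group, hence solvable
  have hWsolv : IsSolvable W := by
    have hPG : IsPGroup p W := by
      intro w
      set σ := (w : G) with hσdef
      have hσW : σ ∈ W := w.2
      set m := orderOf σ with hmdef
      have hm0 : m ≠ 0 := (orderOf_pos σ).ne'
      set a := m.factorization p with hadef
      refine ⟨a, ?_⟩
      set τ := σ ^ (p ^ a) with hτdef
      have hτW : τ ∈ W := W.pow_mem hσW _
      have hτord : orderOf τ = ordCompl[p] m := by
        rw [hτdef, orderOf_pow, ← hmdef, Nat.gcd_eq_right (Nat.ordProj_dvd m p)]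
      have hnd : ¬ p ∣ ordCompl[p] m := Nat.not_dvd_ordCompl hp_prime hm0
      have hcast : ((ordCompl[p] m : ℕ) : B) ∉ 𝔭 := by
        intro hmem
        have hzero : ((ordCompl[p] m : ℕ) : B ⧸ 𝔭) = 0 := by
          rw [← map_natCast (Ideal.Quotient.mk 𝔭)]
          exact Ideal.Quotient.eq_zero_iff_mem.mpr hmem
        exact hnd ((CharP.cast_eq_zero_iff (B ⧸ 𝔭) p _).mp hzero)
      have hsm : ∀ x : B, ((g τ) ^ (ordCompl[p] m)) x = x := by
        intro x
        rw [← map_pow, ← hτord, pow_orderOf_eq_one τ, map_one]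
        rfl
      have hfixτ : ∀ x : B, g τ x = x :=
        eq_id_of_coprime_order 𝔭 hmax (g τ) (hfix τ) hτW.1 hτW.2 hsm hcast
      have hgτ : g τ = 1 := by
        ext x
        rw [hfixτ]
        rfl
      have hτ1 : τ = 1 := hinj (by rw [hgτ, map_one])
      ext
      rw [SubmonoidClass.coe_pow, OneMemClass.coe_one, ← hσdef, ← hτdef, hτ1]
    haveI : Fact p.Prime := ⟨hp_prime⟩
    haveI := hPG.isNilpotent
    exact (inferInstance : Group.IsSolvable W)
  -- derived series bounds
  have hD1 : derivedSeries G 1 ≤ φ.ker := by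
    rw [derivedSeries_succ, derivedSeries_zero]
    refine Subgroup.commutator_le.mpr fun σ _ τ _ => ?_
    rw [MonoidHom.mem_ker, map_commutatorElement]
    exact commutatorElement_eq_one_iff_mul_comm.mpr (ringAut_comm (φ σ) (φ τ))
  have hD2 : derivedSeries G 2 ≤ W := by
    rw [show (2 : ℕ) = 1 + 1 from rfl, derivedSeries_succ]
    refine le_trans (Subgroup.commutator_mono hD1 hD1) ?_
    refine Subgroup.commutator_le.mpr fun σ hσ τ hτ => ?_
    have hcomm_ker : ⁅σ, τ⁆ ∈ φ.ker := by
      rw [commutatorElement_def]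
      exact mul_mem (mul_mem (mul_mem hσ hτ) (inv_mem hσ)) (inv_mem hτ)
    refine (hWmem _).mpr ⟨(hker _).mp hcomm_ker, ?_⟩
    intro u hu
    have hz : g σ⁻¹ (g τ⁻¹ u) ∈ 𝔭 := hfix σ⁻¹ _ (hfix τ⁻¹ u hu)
    have h1 : g ⁅σ, τ⁆ u = g σ (g τ (g σ⁻¹ (g τ⁻¹ u))) := by
      rw [commutatorElement_def, hmulapp, hmulapp, hmulapp]
    have h2 : u = g τ (g σ (g σ⁻¹ (g τ⁻¹ u))) := by
      rw [hinvapp, hinvapp]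
    have hres := comm_mem_sq 𝔭 π hπ𝔭 hπgen (g σ) (g τ) (hfix σ) (hfix τ)
      ((hker σ).mp hσ) ((hker τ).mp hτ) _ hz
    rw [h1]
    nth_rewrite 2 [h2]
    exact hres
  exact solvable_of_derived_two_le W hWsolv hD2

end TateAux

open TateNF in
theorem solvable_of_exists_full_decomposition_group
    (K L : Type) [Field K] [Field L] [NumberField K] [NumberField L]
    [Algebra K L] [IsGalois K L] [FiniteDimensional K L]
    (hyp : ∃ (p : IsDedekindDomain.HeightOneSpectrum (NumberField.RingOfIntegers K))
      (P : IsDedekindDomain.HeightOneSpectrum (NumberField.RingOfIntegers L)),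
      P.asIdeal.comap (algebraMap (NumberField.RingOfIntegers K) (NumberField.RingOfIntegers L))
          = p.asIdeal ∧
      MulAction.stabilizer (L ≃ₐ[K] L) P = ⊤) :
    IsSolvable (L ≃ₐ[K] L) := by
  classical
  obtain ⟨p, P, hPp, hstab⟩ := hyp
  let gR : (L ≃ₐ[K] L) →* ((NumberField.RingOfIntegers L) ≃+* (NumberField.RingOfIntegers L)) :=
    { toFun := fun σ => (galRestrict (NumberField.RingOfIntegers K) K L
        (NumberField.RingOfIntegers L) σ).toRingEquiv
      map_one' := by
        ext x
        exact congrArg _ (show (galRestrict (NumberField.RingOfIntegers K) K L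
          (NumberField.RingOfIntegers L) 1) x = x by rw [map_one]; rfl)
      map_mul' := by
        intro σ τ
        ext x
        exact congrArg _ (show (galRestrict (NumberField.RingOfIntegers K) K L
            (NumberField.RingOfIntegers L) (σ * τ)) x =
          (galRestrict (NumberField.RingOfIntegers K) K L (NumberField.RingOfIntegers L) σ)
            ((galRestrict (NumberField.RingOfIntegers K) K L (NumberField.RingOfIntegers L) τ) x)
          by rw [map_mul]; rfl) }
  have hinj : Function.Injective gR := by
    intro σ τ h
    apply (galRestrict (NumberField.RingOfIntegers K) K L
      (NumberField.RingOfIntegers L)).injective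
    ext x
    exact congrArg _ (DFunLike.congr_fun h x)
  have hsmul : ∀ σ : L ≃ₐ[K] L, σ • P = P := by
    intro σ
    have : σ ∈ MulAction.stabilizer (L ≃ₐ[K] L) P := by rw [hstab]; trivial
    exact this
  have hfix : ∀ (σ : L ≃ₐ[K] L) (x : NumberField.RingOfIntegers L),
      x ∈ P.asIdeal → gR σ x ∈ P.asIdeal := by
    intro σ x hx
    have h1 := congrArg IsDedekindDomain.HeightOneSpectrum.asIdeal (hsmul σ⁻¹)
    rw [TateNF.smul_asIdeal, inv_inv] at h1
    have h2 : x ∈ Ideal.comap (TateNF.galRes K L σ) P.asIdeal := by rw [h1]; exact hx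
    exact Ideal.mem_comap.mp h2
  have hfinq : Finite ((NumberField.RingOfIntegers L) ⧸ P.asIdeal) := by
    exact Ideal.finiteQuotientOfFreeOfNeBot P.asIdeal P.ne_bot
  exact TateAux.isSolvable_of_action gR hinj P.asIdeal P.isPrime P.ne_bot hfinq hfix
end
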